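/- arXiv:2510.00162 — 5 statements merged into one kernel-verified Lean document; each statement's English description precedes it below -/
import Mathlib

section
/- Among all connected graphs on k vertices, the path graph P_k maximizes the sum of pairwise shortest-path distances (equivalently, the average distance between pairs of distinct vertices). -/
open Finset

section Aux

/-- A walk whose support lies in `s` yields reachability in the induced graph. -/
private lemma pgm_reach_induce {V : Type*} (G : SimpleGraph V) (s : Set V) {a b : V}
    (p : G.Walk a b) (hp : ∀ x ∈ p.support, x ∈ s) (ha : a ∈ s) (hb : b ∈ s) :
    (G.induce s).Reachable ⟨a, ha⟩ ⟨b, hb⟩ := by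
  induction p with
  | nil => exact SimpleGraph.Reachable.refl _
  | cons h q ih =>
    rename_i u x w
    have hx : x ∈ s := hp x (by simp)
    refine SimpleGraph.Reachable.trans ?_ (ih (fun y hy => hp y (by simp [hy])) hx hb)
    exact SimpleGraph.Adj.reachable (by simpa using h)

private lemma pgm_dist_le_induce {V : Type*} (G : SimpleGraph V) (s : Set V) (a b : s)
    (h : (G.induce s).Reachable a b) :
    G.dist ↑a ↑b ≤ (G.induce s).dist a b := by
  obtain ⟨p, hp⟩ := h.exists_walk_length_eq_dist
  calc G.dist ↑a ↑b ≤ (p.map (SimpleGraph.Embedding.induce s).toHom).length :=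
        SimpleGraph.dist_le _
    _ = _ := by rw [SimpleGraph.Walk.length_map, hp]

/-- Predecessor on a shortest path. -/
private lemma pgm_exists_pred {V : Type*} (G : SimpleGraph V) {v w : V} {m : ℕ}
    (h : G.dist v w = m + 1) : ∃ x, G.Adj x w ∧ G.dist v x = m := by
  have hr : G.Reachable v w := by
    apply SimpleGraph.Reachable.of_dist_ne_zero; omega
  obtain ⟨p, hp⟩ := hr.exists_walk_length_eq_dist
  cases hq : p.reverse with
  | nil =>
    have h0 : p.length = 0 := by
      have := congrArg SimpleGraph.Walk.length hq
      simpa using this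
    omega
  | cons hadj q =>
    rename_i x
    have hlen : q.length = m := by
      have := congrArg SimpleGraph.Walk.length hq
      rw [SimpleGraph.Walk.length_reverse] at this
      simp at this; omega
    refine ⟨x, hadj.symm, le_antisymm ?_ ?_⟩
    · have := SimpleGraph.dist_le q.reverse
      rwa [SimpleGraph.Walk.length_reverse, hlen] at this
    · by_contra hlt
      push_neg at hlt
      have hrx : G.Reachable v x := ⟨q.reverse⟩
      obtain ⟨r, hrlen⟩ := hrx.exists_walk_length_eq_dist
      have := SimpleGraph.dist_le (r.concat hadj.symm)
      rw [SimpleGraph.Walk.length_concat, hrlen, h] at this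
      omega

/-- Balls grow by at least one vertex per radius step. -/
private lemma pgm_ball_card {V : Type*} [Fintype V] [DecidableEq V] (G : SimpleGraph V)
    (v : V) (m : ℕ) :
    min (m + 1) (Fintype.card V) ≤ (univ.filter (fun w => G.dist v w ≤ m)).card := by
  classical
  induction m with
  | zero =>
    have h1 : v ∈ univ.filter (fun w => G.dist v w ≤ 0) := by simp
    have := Finset.card_pos.mpr ⟨v, h1⟩
    have hc : 1 ≤ Fintype.card V := Fintype.card_pos_iff.mpr ⟨v⟩
    omega
  | succ m ih =>
    by_cases hfull : univ.filter (fun w => G.dist v w ≤ m) = univ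
    · have hsub : univ.filter (fun w => G.dist v w ≤ m) ⊆
          univ.filter (fun w => G.dist v w ≤ m + 1) :=
        Finset.monotone_filter_right _ (fun x hx => by omega)
      have := Finset.card_le_card hsub
      rw [hfull, Finset.card_univ] at this
      omega
    · have hne : (univ.filter (fun w => m < G.dist v w)).Nonempty := by
        rw [Finset.filter_nonempty_iff]
        by_contra hc; push_neg at hc
        exact hfull (Finset.eq_univ_of_forall (fun w => by
          simp only [Finset.mem_filter, Finset.mem_univ, true_and]
          have := hc w (mem_univ w); omega))
      obtain ⟨w, hw, hwmin⟩ := Finset.exists_min_image _ (fun w => G.dist v w) hne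
      simp only [Finset.mem_filter, Finset.mem_univ, true_and] at hw
      have hd : G.dist v w = m + 1 := by
        rcases Nat.exists_eq_add_of_lt hw with ⟨c, hc⟩
        rcases Nat.eq_zero_or_pos c with h0 | hpos
        · omega
        · exfalso
          have hd1 : G.dist v w = (G.dist v w - 1) + 1 := by omega
          obtain ⟨x, hadj, hx⟩ := pgm_exists_pred G hd1
          have hxm : m < G.dist v x := by omega
          have := hwmin x (by simp [hxm])
          omega
      have hsub : insert w (univ.filter (fun w => G.dist v w ≤ m)) ⊆
          univ.filter (fun w => G.dist v w ≤ m + 1) := by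
        intro x hx
        simp only [Finset.mem_insert, Finset.mem_filter, Finset.mem_univ, true_and] at hx ⊢
        rcases hx with rfl | hx <;> omega
      have hcard := Finset.card_le_card hsub
      rw [Finset.card_insert_of_notMem (by simp; omega)] at hcard
      omega

/-- Distances from a fixed vertex sum to at most `0 + 1 + ⋯ + (card V - 1)`. -/
private lemma pgm_sum_dist_le {V : Type*} [Fintype V] [DecidableEq V] (G : SimpleGraph V)
    (v : V) : ∑ w : V, G.dist v w ≤ ∑ i ∈ range (Fintype.card V), i := by
  classical
  set n := Fintype.card V with hn
  have hdlt : ∀ w : V, G.dist v w < n := by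
    intro w
    by_cases hr : G.Reachable v w
    · obtain ⟨p, hp, hlen⟩ := hr.exists_path_of_dist
      have := hp.length_lt
      omega
    · rw [SimpleGraph.dist_eq_zero_of_not_reachable hr]
      exact Fintype.card_pos_iff.mpr ⟨v⟩
  have key : ∑ w : V, G.dist v w
      = ∑ i ∈ range n, (univ.filter (fun w => i < G.dist v w)).card := by
    simp_rw [Finset.card_filter]
    rw [Finset.sum_comm]
    congr 1
    ext w
    rw [← Finset.card_filter]
    have : (range n).filter (fun i => i < G.dist v w) = range (G.dist v w) := by
      ext i
      simp only [Finset.mem_filter, Finset.mem_range]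
      have := hdlt w
      omega
    rw [this, Finset.card_range]
  rw [key]
  have step : ∀ i ∈ range n, (univ.filter (fun w => i < G.dist v w)).card ≤ n - 1 - i := by
    intro i hi
    rw [Finset.mem_range] at hi
    have h1 := pgm_ball_card G v i
    have h2 : (univ.filter (fun w => G.dist v w ≤ i)).card
        + (univ.filter (fun w => i < G.dist v w)).card = n := by
      have h2' := Finset.card_filter_add_card_filter_not
        (s := (univ : Finset V)) (p := fun w => G.dist v w ≤ i)
      have heq : univ.filter (fun w => ¬ (G.dist v w ≤ i))
          = univ.filter (fun w => i < G.dist v w) := by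
        ext w; simp
      rw [heq, Finset.card_univ] at h2'
      exact h2'
    omega
  calc ∑ i ∈ range n, (univ.filter (fun w => i < G.dist v w)).card
      ≤ ∑ i ∈ range n, (n - 1 - i) := Finset.sum_le_sum step
    _ = ∑ i ∈ range n, i := by
        rcases Nat.eq_zero_or_pos n with h0 | hpos
        · simp [h0]
        · rw [← Finset.sum_range_reflect]
          apply Finset.sum_congr rfl
          intro i hi
          rw [Finset.mem_range] at hi
          omega

/-- Every connected graph on at least two vertices has a non-cut vertex. -/
private lemma pgm_exists_noncut {V : Type*} [Fintype V] [DecidableEq V] (G : SimpleGraph V)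
    (hG : G.Connected) (h2 : 2 ≤ Fintype.card V) :
    ∃ v : V, (G.induce {v}ᶜ).Connected := by
  have hne : (univ : Finset V).Nonempty := by
    rw [← Finset.card_pos, Finset.card_univ]; omega
  obtain ⟨u, hu0⟩ := hne
  obtain ⟨v, -, hvmax⟩ := Finset.exists_max_image univ (fun w => G.dist u w) ⟨u, hu0⟩
  refine ⟨v, ?_⟩
  have hvu : v ≠ u := by
    obtain ⟨w, hw⟩ : ∃ w : V, w ≠ u := Fintype.exists_ne_of_one_lt_card (by omega) u
    have hpos : 0 < G.dist u w := (hG.pos_dist_of_ne hw.symm)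
    have h3 := hvmax w (mem_univ w)
    intro h
    rw [h, SimpleGraph.dist_self] at h3
    omega
  have hu : u ∈ ({v}ᶜ : Set V) := by simp [hvu.symm]
  have key : ∀ (a : V) (ha : a ∈ ({v}ᶜ : Set V)),
      (G.induce {v}ᶜ).Reachable ⟨a, ha⟩ ⟨u, hu⟩ := by
    intro a ha
    have hav : a ≠ v := by simpa using ha
    obtain ⟨p, hpath, hlen⟩ := hG.exists_path_of_dist u a
    have hsup : ∀ x ∈ p.support, x ∈ ({v}ᶜ : Set V) := by
      intro x hx
      simp only [Set.mem_compl_iff, Set.mem_singleton_iff]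
      rintro rfl
      have hq := p.dropUntil x hx
      have hlsplit := congrArg SimpleGraph.Walk.length (p.take_spec hx)
      rw [SimpleGraph.Walk.length_append] at hlsplit
      have hd1 : G.dist u x ≤ (p.takeUntil x hx).length := SimpleGraph.dist_le _
      have hd2 : 1 ≤ (p.dropUntil x hx).length := by
        by_contra hc
        push_neg at hc
        have h0 : (p.dropUntil x hx).length = 0 := by omega
        exact hav.symm (SimpleGraph.Walk.eq_of_length_eq_zero h0)
      have hmax := hvmax a (mem_univ a)
      omega
    exact (pgm_reach_induce G _ p hsup (hsup u (SimpleGraph.Walk.start_mem_support p))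
      (hsup a (SimpleGraph.Walk.end_mem_support p))).symm
  rw [SimpleGraph.connected_iff]
  exact ⟨fun a b => (key a.val a.prop).trans (key b.val b.prop).symm, ⟨⟨u, hu⟩⟩⟩

/-- The extremal value: the total (ordered-pair) distance of the path graph. -/
private def pgmBound : ℕ → ℕ
  | 0 => 0
  | n + 1 => pgmBound n + n * (n + 1)

/-- Any connected graph on `n` vertices has total distance at most `pgmBound n`. -/
private lemma pgm_main_bound : ∀ (n : ℕ) (V : Type) [Fintype V] [DecidableEq V]
    (G : SimpleGraph V), Fintype.card V = n → G.Connected →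
    ∑ u : V, ∑ w : V, G.dist u w ≤ pgmBound n := by
  intro n
  induction n with
  | zero =>
    intro V _ _ G hcard hG
    have : IsEmpty V := Fintype.card_eq_zero_iff.mp hcard
    simp [pgmBound]
  | succ n ih =>
    intro V _ _ G hcard hG
    rcases Nat.eq_zero_or_pos n with rfl | hn
    · have hsub : Subsingleton V := Fintype.card_le_one_iff_subsingleton.mp (by omega)
      have : ∀ u w : V, G.dist u w = 0 := fun u w => by
        rw [Subsingleton.elim u w, SimpleGraph.dist_self]
      simp [this, pgmBound]
    · obtain ⟨v, hv⟩ := pgm_exists_noncut G hG (by omega)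
      classical
      have split : ∑ u : V, ∑ w : V, G.dist u w
          = ∑ w : V, G.dist v w + ∑ u ∈ univ.erase v, G.dist u v
            + ∑ u ∈ univ.erase v, ∑ w ∈ univ.erase v, G.dist u w := by
        rw [← Finset.sum_erase_add _ _ (mem_univ v)]
        have inner : ∀ u : V, ∑ w : V, G.dist u w
            = ∑ w ∈ univ.erase v, G.dist u w + G.dist u v :=
          fun u => (Finset.sum_erase_add _ _ (mem_univ v)).symm
        simp_rw [inner]
        rw [Finset.sum_add_distrib]
        ring
      rw [split]
      have hcards : Fintype.card ({v}ᶜ : Set V) = n := by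
        rw [Fintype.card_compl_set, Set.card_singleton, hcard]
        omega
      have hsubty : ∑ u ∈ univ.erase v, ∑ w ∈ univ.erase v, G.dist u w
          = ∑ a : ({v}ᶜ : Set V), ∑ b : ({v}ᶜ : Set V), G.dist ↑a ↑b := by
        rw [Finset.sum_subtype (p := fun x => x ∈ ({v}ᶜ : Set V)) (univ.erase v)
          (fun x => by simp) (fun u => ∑ w ∈ univ.erase v, G.dist u w)]
        apply Finset.sum_congr rfl
        intro a _
        rw [Finset.sum_subtype (p := fun x => x ∈ ({v}ᶜ : Set V)) (univ.erase v)
          (fun x => by simp) (fun w => G.dist ↑a w)]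
      have hind : ∑ a : ({v}ᶜ : Set V), ∑ b : ({v}ᶜ : Set V), G.dist ↑a ↑b
          ≤ pgmBound n := by
        calc ∑ a : ({v}ᶜ : Set V), ∑ b : ({v}ᶜ : Set V), G.dist ↑a ↑b
            ≤ ∑ a : ({v}ᶜ : Set V), ∑ b : ({v}ᶜ : Set V), (G.induce {v}ᶜ).dist a b := by
              apply Finset.sum_le_sum; intro a _
              apply Finset.sum_le_sum; intro b _
              exact pgm_dist_le_induce G _ a b (hv.preconnected a b)
          _ ≤ pgmBound n := ih _ (G.induce {v}ᶜ) hcards hv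
      have hGauss : (∑ i ∈ range (n+1), i) * 2 = (n+1) * n := by
        rw [Finset.sum_range_id_mul_two]
        simp
      have h1 : ∑ w : V, G.dist v w ≤ ∑ i ∈ range (n+1), i := by
        have := pgm_sum_dist_le G v
        rwa [hcard] at this
      have h2 : ∑ u ∈ univ.erase v, G.dist u v ≤ ∑ i ∈ range (n+1), i := by
        calc ∑ u ∈ univ.erase v, G.dist u v ≤ ∑ u : V, G.dist u v :=
              Finset.sum_le_sum_of_subset (Finset.erase_subset _ _)
          _ = ∑ u : V, G.dist v u := by simp_rw [SimpleGraph.dist_comm]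
          _ ≤ _ := h1
      show _ ≤ pgmBound n + n * (n + 1)
      have hcomm : n * (n + 1) = (n + 1) * n := Nat.mul_comm _ _
      omega

private lemma pgm_natdist_le_walk {k : ℕ} {u v : Fin k}
    (p : (SimpleGraph.pathGraph k).Walk u v) :
    Nat.dist u.val v.val ≤ p.length := by
  induction p with
  | nil => simp [Nat.dist_self]
  | cons h q ih =>
    rename_i a x b
    have h1 : Nat.dist a.val x.val = 1 := by
      rw [SimpleGraph.pathGraph_adj] at h
      rcases h with h | h <;> simp [Nat.dist] <;> omega
    calc Nat.dist a.val b.val ≤ Nat.dist a.val x.val + Nat.dist x.val b.val :=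
          Nat.dist.triangle_inequality _ _ _
      _ ≤ 1 + q.length := by omega
      _ = (SimpleGraph.Walk.cons h q).length := by simp; omega

private lemma pgm_natdist_le_pathdist {k : ℕ} (u v : Fin k) :
    Nat.dist u.val v.val ≤ (SimpleGraph.pathGraph k).dist u v := by
  rcases k with _ | m
  · exact absurd u.isLt (by omega)
  · obtain ⟨p, hp⟩ :=
      (SimpleGraph.pathGraph_connected m).exists_walk_length_eq_dist u v
    rw [← hp]
    exact pgm_natdist_le_walk p

private lemma pgm_natdist_sum (k : ℕ) :
    ∑ u : Fin k, ∑ v : Fin k, Nat.dist u.val v.val = pgmBound k := by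
  induction k with
  | zero => simp [pgmBound]
  | succ k ih =>
    rw [Fin.sum_univ_castSucc]
    simp_rw [Fin.sum_univ_castSucc]
    simp only [Fin.coe_castSucc, Fin.val_last]
    rw [Finset.sum_add_distrib, ih]
    have hsum : ∀ f : Fin k → ℕ, (∀ u : Fin k, f u = k - u.val) →
        ∑ u : Fin k, f u = ∑ i ∈ range (k + 1), i := by
      intro f hf
      calc ∑ u : Fin k, f u = ∑ i ∈ range k, (k - i) := by
            rw [Finset.sum_range fun i => k - i]
            exact Finset.sum_congr rfl fun u _ => hf u
        _ = ∑ i ∈ range k, (i + 1) := by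
            rw [← Finset.sum_range_reflect]
            exact Finset.sum_congr rfl fun i hi => by
              rw [Finset.mem_range] at hi; omega
        _ = ∑ i ∈ range (k + 1), i := by
            rw [Finset.sum_range_succ_comm]
            simp [Finset.sum_add_distrib]
            omega
    have h1 : ∑ u : Fin k, Nat.dist u.val k = ∑ i ∈ range (k + 1), i :=
      hsum _ fun u => by have := u.isLt; simp only [Nat.dist]; omega
    have h2 : ∑ v : Fin k, Nat.dist k v.val = ∑ i ∈ range (k + 1), i :=
      hsum _ fun v => by have := v.isLt; simp only [Nat.dist]; omega
    have hG : (∑ i ∈ range (k + 1), i) * 2 = (k + 1) * k := by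
      rw [Finset.sum_range_id_mul_two]; simp
    have h0 : Nat.dist k k = 0 := Nat.dist_self k
    show pgmBound k + ∑ u : Fin k, Nat.dist u.val k
        + (∑ v : Fin k, Nat.dist k v.val + Nat.dist k k) = pgmBound k + k * (k + 1)
    have hcomm : k * (k + 1) = (k + 1) * k := Nat.mul_comm _ _
    omega

end Aux

/-- Among connected graphs on k vertices, the path graph maximizes the sum of
pairwise shortest-path distances. -/
theorem path_graph_maximizes_total_distance (k : ℕ) (G : SimpleGraph (Fin k))
    (hG : G.Connected) :
    ∑ u : Fin k, ∑ v : Fin k, G.dist u v ≤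
      ∑ u : Fin k, ∑ v : Fin k, (SimpleGraph.pathGraph k).dist u v := by
  calc ∑ u : Fin k, ∑ v : Fin k, G.dist u v
      ≤ pgmBound k := pgm_main_bound k (Fin k) G (Fintype.card_fin k) hG
    _ = ∑ u : Fin k, ∑ v : Fin k, Nat.dist u.val v.val := (pgm_natdist_sum k).symm
    _ ≤ ∑ u : Fin k, ∑ v : Fin k, (SimpleGraph.pathGraph k).dist u v := by
        apply Finset.sum_le_sum; intro u _
        apply Finset.sum_le_sum; intro v _
        exact pgm_natdist_le_pathdist u v
end

section
/- Let ε̄ > 0, k ≥ 1, and for each j ∈ {1,…,k} suppose a sequence of real numbers a₁,…,a_k in [0,1] satisfies: for every ζ ∈ {1,…,k}, (1−ε̄)/(k−ζ+1) · (1 − Σ_{j<ζ} a_j) ≤ a_ζ ≤ (1+ε̄)/(k−ζ+1) · (1 − Σ_{j<ζ} a_j), where additionally Σ_{j<ζ} a_j is bounded using previous steps. Then for every j ∈ {1,…,k}: (1 − (2^j − 1)ε̄)/k ≤ a_j ≤ (1 + (2^j − 1)ε̄)/k, provided ε̄ ≤ 2^{−k}. -/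
open Finset

set_option maxHeartbeats 1000000

/-- Geometric error propagation: if each aζ is within a (1±ε̄)/(k−ζ+1) factor of
the remaining mass 1 − Σ_{j<ζ} a_j, then a_j is within (1±(2^j−1)ε̄)/k. -/
theorem error_propagation (k : ℕ) (hk : 1 ≤ k) (ε : ℝ) (hε : 0 < ε)
    (hεk : ε * 2 ^ k ≤ 1) (a : ℕ → ℝ)
    (h01 : ∀ j ∈ Finset.Icc 1 k, 0 ≤ a j ∧ a j ≤ 1)
    (hrec : ∀ ζ ∈ Finset.Icc 1 k,
      (1 - ε) / ((k : ℝ) - ζ + 1) * (1 - ∑ j ∈ Finset.Icc 1 (ζ - 1), a j) ≤ a ζ ∧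
      a ζ ≤ (1 + ε) / ((k : ℝ) - ζ + 1) * (1 - ∑ j ∈ Finset.Icc 1 (ζ - 1), a j)) :
    ∀ j ∈ Finset.Icc 1 k,
      (1 - (2 ^ j - 1) * ε) / k ≤ a j ∧ a j ≤ (1 + (2 ^ j - 1) * ε) / k := by
  have hk0 : (0:ℝ) < k := by exact_mod_cast hk
  have h2k : (2:ℝ) ≤ 2 ^ k := by
    calc (2:ℝ) = 2^1 := by norm_num
    _ ≤ 2^k := by exact pow_le_pow_right₀ (by norm_num) hk
  have hε2 : ε ≤ 1/2 := by nlinarith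
  have hpow : ∀ n : ℕ, n ≤ k → ε * 2 ^ n ≤ 1 := by
    intro n hn
    have : (2:ℝ)^n ≤ 2^k := pow_le_pow_right₀ (by norm_num) hn
    nlinarith
  -- bounds on remaining mass
  have key : ∀ n, n < k →
      ((k:ℝ) - n)/k * (1 - ((2:ℝ)^n - 1)*ε) ≤ 1 - ∑ j ∈ Finset.Icc 1 n, a j ∧
      1 - ∑ j ∈ Finset.Icc 1 n, a j ≤ ((k:ℝ) - n)/k * (1 + ((2:ℝ)^n - 1)*ε) := by
    intro n
    induction n with
    | zero =>
      intro _
      simp only [Nat.cast_zero, sub_zero, pow_zero]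
      rw [show Finset.Icc 1 0 = (∅ : Finset ℕ) by rfl]
      simp only [Finset.sum_empty, sub_zero]
      rw [div_self hk0.ne']
      norm_num
    | succ n ih =>
      intro hn1
      have hnk : n < k := Nat.lt_of_succ_lt hn1
      obtain ⟨ihl, ihr⟩ := ih hnk
      have hmem : n + 1 ∈ Finset.Icc 1 k := by
        simp only [Finset.mem_Icc]; omega
      obtain ⟨hal, har⟩ := hrec (n+1) hmem
      simp only [Nat.add_sub_cancel] at hal har
      have hsum : ∑ j ∈ Finset.Icc 1 (n+1), a j
          = (∑ j ∈ Finset.Icc 1 n, a j) + a (n+1) := by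
        rw [Finset.sum_Icc_succ_top (Nat.one_le_iff_ne_zero.mpr (Nat.succ_ne_zero n))]
      set R := 1 - ∑ j ∈ Finset.Icc 1 n, a j with hR
      set m : ℝ := (k:ℝ) - (n+1) with hm
      have hm1 : (1:ℝ) ≤ m := by
        have h2 : (n:ℝ) + 2 ≤ k := by exact_mod_cast hn1
        rw [hm]; linarith
      have hcast : ((k:ℝ) - (↑(n+1):ℝ) + 1) = m + 1 := by push_cast [hm]; ring
      rw [hcast] at hal har
      have hm1pos : (0:ℝ) < m + 1 := by linarith
      have hal' : (1 - ε) * R ≤ (m + 1) * a (n+1) := by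
        rw [div_mul_eq_mul_div, div_le_iff₀ hm1pos] at hal; linarith [hal]
      have har' : (m + 1) * a (n+1) ≤ (1 + ε) * R := by
        rw [div_mul_eq_mul_div, le_div_iff₀ hm1pos] at har; linarith [har]
      have hkn : (k:ℝ) - (n:ℝ) = m + 1 := by rw [hm]; push_cast; ring
      have ihl' : (m+1) * (1 - ((2:ℝ)^n - 1)*ε) ≤ (k:ℝ) * R := by
        rw [hkn, div_mul_eq_mul_div, div_le_iff₀ hk0] at ihl
        nlinarith [ihl]
      have ihr' : (k:ℝ) * R ≤ (m+1) * (1 + ((2:ℝ)^n - 1)*ε) := by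
        rw [hkn, div_mul_eq_mul_div, le_div_iff₀ hk0] at ihr
        nlinarith [ihr]
      have hc0 : (0:ℝ) ≤ (2:ℝ)^n - 1 := by
        have : (1:ℝ) ≤ 2^n := one_le_pow₀ (by norm_num)
        linarith
      have hcε : ((2:ℝ)^n - 1) * ε ≤ 1 := by
        have := hpow n hnk.le
        nlinarith
      rw [hsum]
      have hgoalR : 1 - ((∑ j ∈ Finset.Icc 1 n, a j) + a (n+1)) = R - a (n+1) := by
        rw [hR]; ring
      rw [hgoalR]
      rw [pow_succ]
      constructor
      · rw [div_mul_eq_mul_div, div_le_iff₀ hk0]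
        have e1 : (k:ℝ) * R * (m - ε) ≤ (k:ℝ) * (m+1) * (R - a (n+1)) := by
          have h := mul_le_mul_of_nonneg_left har' hk0.le
          linarith [h]
        have e2 : (m+1) * (1 - ((2:ℝ)^n - 1)*ε) * (m - ε) ≤ (k:ℝ) * R * (m - ε) := by
          have hme : (0:ℝ) ≤ m - ε := by linarith
          exact mul_le_mul_of_nonneg_right ihl' hme
        have e3 : (m+1) * (m * (1 - ((2:ℝ)^n*2 - 1)*ε)) ≤
            (m+1) * (1 - ((2:ℝ)^n - 1)*ε) * (m - ε) := by
          nlinarith [mul_nonneg (mul_nonneg hc0 hε.le) (by linarith : (0:ℝ) ≤ m - 1),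
            mul_nonneg hε.le (by linarith : (0:ℝ) ≤ m - 1),
            mul_nonneg (mul_nonneg hc0 hε.le) hε.le, hm1pos,
            mul_nonneg (mul_nonneg (mul_nonneg hc0 hε.le) hε.le) (by linarith : (0:ℝ) ≤ m + 1),
            mul_nonneg (mul_nonneg (mul_nonneg hc0 hε.le) (by linarith : (0:ℝ) ≤ m - 1)) (by linarith : (0:ℝ) ≤ m + 1),
            mul_nonneg (mul_nonneg hε.le (by linarith : (0:ℝ) ≤ m - 1)) (by linarith : (0:ℝ) ≤ m + 1)]
        have hfin : m * (1 - ((2:ℝ)^n*2 - 1)*ε) ≤ (k:ℝ) * (R - a (n+1)) := by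
          have h := le_trans (le_trans e3 e2) e1
          have h2 : (m+1) * (m * (1 - ((2:ℝ)^n*2 - 1)*ε)) ≤
              (m+1) * ((k:ℝ) * (R - a (n+1))) := by linarith [h]
          exact le_of_mul_le_mul_left h2 hm1pos
        rw [hm] at hfin
        push_cast at hfin ⊢
        linarith [hfin]
      · rw [div_mul_eq_mul_div, le_div_iff₀ hk0]
        have e1 : (k:ℝ) * (m+1) * (R - a (n+1)) ≤ (k:ℝ) * R * (m + ε) := by
          have h := mul_le_mul_of_nonneg_left hal' hk0.le
          linarith [h]
        have e2 : (k:ℝ) * R * (m + ε) ≤ (m+1) * (1 + ((2:ℝ)^n - 1)*ε) * (m + ε) := by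
          have hme : (0:ℝ) ≤ m + ε := by linarith
          exact mul_le_mul_of_nonneg_right ihr' hme
        have e3 : (m+1) * (1 + ((2:ℝ)^n - 1)*ε) * (m + ε) ≤
            (m+1) * (m * (1 + ((2:ℝ)^n*2 - 1)*ε)) := by
          nlinarith [mul_nonneg (mul_nonneg hc0 hε.le) (by linarith : (0:ℝ) ≤ m - 1),
            mul_nonneg hε.le (by linarith : (0:ℝ) ≤ m - 1),
            mul_nonneg (mul_nonneg hc0 hε.le) (by linarith : (0:ℝ) ≤ 1 - ε), hm1pos,
            mul_nonneg (mul_nonneg (mul_nonneg hc0 hε.le) (by linarith : (0:ℝ) ≤ 1 - ε)) (by linarith : (0:ℝ) ≤ m + 1),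
            mul_nonneg (mul_nonneg (mul_nonneg hc0 hε.le) (by linarith : (0:ℝ) ≤ m - 1)) (by linarith : (0:ℝ) ≤ m + 1),
            mul_nonneg (mul_nonneg hε.le (by linarith : (0:ℝ) ≤ m - 1)) (by linarith : (0:ℝ) ≤ m + 1)]
        have hfin : (k:ℝ) * (R - a (n+1)) ≤ m * (1 + ((2:ℝ)^n*2 - 1)*ε) := by
          have h := le_trans (le_trans e1 e2) e3
          have h2 : (m+1) * ((k:ℝ) * (R - a (n+1))) ≤
              (m+1) * (m * (1 + ((2:ℝ)^n*2 - 1)*ε)) := by linarith [h]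
          exact le_of_mul_le_mul_left h2 hm1pos
        rw [hm] at hfin
        push_cast at hfin ⊢
        linarith [hfin]
  -- conclude a_j bounds
  intro j hj
  simp only [Finset.mem_Icc] at hj
  obtain ⟨hj1, hjk⟩ := hj
  obtain ⟨n, rfl⟩ : ∃ n, j = n + 1 := ⟨j - 1, (Nat.succ_pred_eq_of_pos hj1).symm⟩
  have hnk : n < k := Nat.lt_of_succ_le hjk
  obtain ⟨ihl, ihr⟩ := key n hnk
  obtain ⟨hal, har⟩ := hrec (n+1) (by simp only [Finset.mem_Icc]; omega)
  simp only [Nat.add_sub_cancel] at hal har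
  set R := 1 - ∑ j ∈ Finset.Icc 1 n, a j with hR
  set m : ℝ := (k:ℝ) - (n+1) with hm
  have hm0 : (0:ℝ) ≤ m := by
    have h2 : (n:ℝ) + 1 ≤ k := by exact_mod_cast hjk
    rw [hm]; linarith
  have hcast : ((k:ℝ) - (↑(n+1):ℝ) + 1) = m + 1 := by push_cast [hm]; ring
  rw [hcast] at hal har
  have hm1pos : (0:ℝ) < m + 1 := by linarith
  have hal' : (1 - ε) * R ≤ (m + 1) * a (n+1) := by
    rw [div_mul_eq_mul_div, div_le_iff₀ hm1pos] at hal; linarith [hal]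
  have har' : (m + 1) * a (n+1) ≤ (1 + ε) * R := by
    rw [div_mul_eq_mul_div, le_div_iff₀ hm1pos] at har; linarith [har]
  have hkn : (k:ℝ) - (n:ℝ) = m + 1 := by rw [hm]; push_cast; ring
  have ihl' : (m+1) * (1 - ((2:ℝ)^n - 1)*ε) ≤ (k:ℝ) * R := by
    rw [hkn, div_mul_eq_mul_div, div_le_iff₀ hk0] at ihl
    nlinarith [ihl]
  have ihr' : (k:ℝ) * R ≤ (m+1) * (1 + ((2:ℝ)^n - 1)*ε) := by
    rw [hkn, div_mul_eq_mul_div, le_div_iff₀ hk0] at ihr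
    nlinarith [ihr]
  have hc0 : (0:ℝ) ≤ (2:ℝ)^n - 1 := by
    have : (1:ℝ) ≤ 2^n := one_le_pow₀ (by norm_num)
    linarith
  have hcε : ((2:ℝ)^n - 1) * ε ≤ 1 := by
    have := hpow n hnk.le
    nlinarith
  have hε1 : ε ≤ 1 := by linarith
  rw [pow_succ]
  constructor
  · rw [div_le_iff₀ hk0]
    have e1 : (1 - ε) * ((k:ℝ) * R) ≤ (m+1) * (a (n+1) * k) := by
      have h := mul_le_mul_of_nonneg_left hal' hk0.le
      linarith [h]
    have e2 : (1 - ε) * ((m+1) * (1 - ((2:ℝ)^n - 1)*ε)) ≤ (1 - ε) * ((k:ℝ) * R) := by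
      have : (0:ℝ) ≤ 1 - ε := by linarith
      exact mul_le_mul_of_nonneg_left ihl' this
    have e3 : (m+1) * (1 - ((2:ℝ)^n*2 - 1)*ε) ≤
        (1 - ε) * ((m+1) * (1 - ((2:ℝ)^n - 1)*ε)) := by
      nlinarith [mul_nonneg (mul_nonneg hc0 hε.le) hε.le, hm1pos,
        mul_nonneg (mul_nonneg (mul_nonneg hc0 hε.le) hε.le) (by linarith : (0:ℝ) ≤ m + 1)]
    have h := le_trans (le_trans e3 e2) e1
    have h2 : (m+1) * (1 - ((2:ℝ)^n*2 - 1)*ε) ≤ (m+1) * (a (n+1) * k) := by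
      linarith [h]
    exact le_of_mul_le_mul_left h2 hm1pos
  · rw [le_div_iff₀ hk0]
    have e1 : (m+1) * (a (n+1) * k) ≤ (1 + ε) * ((k:ℝ) * R) := by
      have h := mul_le_mul_of_nonneg_left har' hk0.le
      linarith [h]
    have e2 : (1 + ε) * ((k:ℝ) * R) ≤ (1 + ε) * ((m+1) * (1 + ((2:ℝ)^n - 1)*ε)) := by
      have : (0:ℝ) ≤ 1 + ε := by linarith
      exact mul_le_mul_of_nonneg_left ihr' this
    have e3 : (1 + ε) * ((m+1) * (1 + ((2:ℝ)^n - 1)*ε)) ≤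
        (m+1) * (1 + ((2:ℝ)^n*2 - 1)*ε) := by
      nlinarith [mul_nonneg (mul_nonneg hc0 hε.le) (by linarith : (0:ℝ) ≤ 1 - ε), hm1pos,
        mul_nonneg (mul_nonneg (mul_nonneg hc0 hε.le) (by linarith : (0:ℝ) ≤ 1 - ε)) (by linarith : (0:ℝ) ≤ m + 1)]
    have h := le_trans (le_trans e1 e2) e3
    have h2 : (m+1) * (a (n+1) * k) ≤ (m+1) * (1 + ((2:ℝ)^n*2 - 1)*ε) := by
      linarith [h]
    exact le_of_mul_le_mul_left h2 hm1pos
end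

section
/- With ε̄ = ε/2^k for ε ∈ (0,1), if for each j ∈ {1,…,k} the fraction a_j satisfies the recursive bounds (1−ε̄)/(k−j+1)·(1−Σ_{i<j} a_i) ≤ a_j ≤ (1+ε̄)/(k−j+1)·(1−Σ_{i<j} a_i), then for every j, (1−ε)/k < a_j < (1+ε)/k. -/
open Finset


private lemma key_lo (m e K : ℝ) (hm0 : 0 ≤ m) (he : 0 < e) (he1 : e < 1) (hK : 2 ≤ K) :
    (1 - (2 * m + 1) * e) * (K - 1) ≤ (1 - m * e) * (K - (1 + e)) := by
  nlinarith [mul_nonneg hm0 he.le, mul_nonneg (mul_nonneg hm0 he.le) he.le,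
    mul_nonneg (mul_nonneg (by linarith : (0:ℝ) ≤ K - 2) (by linarith : (0:ℝ) ≤ m + 1)) he.le]

private lemma key_up (m e K : ℝ) (hm0 : 0 ≤ m) (he : 0 < e) (he1 : e < 1) (hK : 2 ≤ K) :
    (1 + m * e) * (K - (1 - e)) ≤ (1 + (2 * m + 1) * e) * (K - 1) := by
  nlinarith [mul_nonneg hm0 he.le, mul_nonneg (mul_nonneg hm0 he.le) he.le,
    mul_nonneg (mul_nonneg (by linarith : (0:ℝ) ≤ K - 2) (by linarith : (0:ℝ) ≤ m + 1)) he.le]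

/-- With ε̄ = ε/2^k, the recursive sample bounds imply the uniform guarantee
(1−ε)/k < a_j < (1+ε)/k for every iteration j. -/
theorem uniform_fairness_guarantee (k : ℕ) (hk : 1 ≤ k) (ε : ℝ)
    (hε0 : 0 < ε) (hε1 : ε < 1) (a : ℕ → ℝ)
    (h01 : ∀ j ∈ Finset.Icc 1 k, 0 ≤ a j ∧ a j ≤ 1)
    (hrec : ∀ j ∈ Finset.Icc 1 k,
      (1 - ε / 2 ^ k) / ((k : ℝ) - j + 1) * (1 - ∑ i ∈ Finset.Icc 1 (j - 1), a i) ≤ a j ∧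
      a j ≤ (1 + ε / 2 ^ k) / ((k : ℝ) - j + 1) * (1 - ∑ i ∈ Finset.Icc 1 (j - 1), a i)) :
    ∀ j ∈ Finset.Icc 1 k, (1 - ε) / k < a j ∧ a j < (1 + ε) / k := by
  have hkR : (0:ℝ) < k := by exact_mod_cast hk
  have h2k : (1:ℝ) ≤ 2 ^ k := one_le_pow₀ (by norm_num)
  have h2kpos : (0:ℝ) < 2 ^ k := by positivity
  set e : ℝ := ε / 2 ^ k with he
  clear_value e
  have heε : e * 2 ^ k = ε := by rw [he]; field_simp
  have hepos : 0 < e := by rw [he]; positivity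
  have he1 : e < 1 := by
    rw [he, div_lt_one (by positivity)]
    linarith
  -- auxiliary bound on the residuals
  have aux : ∀ n : ℕ, n + 1 ≤ k →
      (1 - ((2:ℝ) ^ n - 1) * e) * ((k:ℝ) - n) / k ≤ 1 - ∑ i ∈ Finset.Icc 1 n, a i ∧
      1 - ∑ i ∈ Finset.Icc 1 n, a i ≤ (1 + ((2:ℝ) ^ n - 1) * e) * ((k:ℝ) - n) / k := by
    intro n
    induction n with
    | zero =>
      intro _
      simp only [Finset.Icc_self, pow_zero, Nat.cast_zero, sub_self, zero_mul, sub_zero,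
        add_zero, one_mul]
      constructor <;> simp [Finset.sum_empty, div_self (ne_of_gt hkR)]
    | succ n ih =>
      intro hn
      have hn' : n + 1 ≤ k := Nat.le_of_succ_le hn
      obtain ⟨ihl, ihr⟩ := ih hn'
      have hmem : n + 1 ∈ Finset.Icc 1 k := Finset.mem_Icc.mpr ⟨Nat.succ_le_succ (Nat.zero_le n), hn'⟩
      obtain ⟨hl, hr⟩ := hrec (n + 1) hmem
      have hsimp : (n + 1 : ℕ) - 1 = n := rfl
      rw [hsimp] at hl hr
      have hcast : ((n + 1 : ℕ) : ℝ) = (n : ℝ) + 1 := by push_cast; ring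
      rw [hcast] at hl hr ⊢
      have hD : (k:ℝ) - ((n:ℝ) + 1) + 1 = (k:ℝ) - n := by ring
      rw [hD] at hl hr
      have hsum : ∑ i ∈ Finset.Icc 1 (n + 1), a i = (∑ i ∈ Finset.Icc 1 n, a i) + a (n + 1) := by
        rw [Finset.sum_Icc_succ_top (Nat.succ_le_succ (Nat.zero_le n))]
      set R : ℝ := 1 - ∑ i ∈ Finset.Icc 1 n, a i with hR
      have hRnew : 1 - ∑ i ∈ Finset.Icc 1 (n + 1), a i = R - a (n + 1) := by
        rw [hsum, hR]; ring
      rw [hRnew]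
      clear_value R
      set m : ℝ := (2:ℝ) ^ n - 1 with hm
      clear_value m
      have hm0 : 0 ≤ m := by
        have : (1:ℝ) ≤ 2 ^ n := one_le_pow₀ (by norm_num)
        rw [hm]; linarith
      have hkn2 : (n:ℝ) + 2 ≤ k := by exact_mod_cast hn
      have hDge : (2:ℝ) ≤ (k:ℝ) - n := by linarith
      have hDpos : (0:ℝ) < (k:ℝ) - n := by linarith
      have hpow : (2:ℝ) ^ n ≤ 2 ^ k := pow_le_pow_right₀ (by norm_num) (by omega)
      have hmle : m ≤ 2 ^ k - 1 := by rw [hm]; linarith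
      have hme1 : m * e < 1 := by
        have h2 := mul_le_mul_of_nonneg_right hmle hepos.le
        linarith [heε]
      -- upper bound on new residual
      have hfac1 : (0:ℝ) ≤ ((k:ℝ) - n) - (1 - e) := by linarith
      have hfac2 : (0:ℝ) ≤ ((k:ℝ) - n) - (1 + e) := by linarith
      have hRup : R - a (n + 1) ≤ (1 + m * e) * (((k:ℝ) - n) - (1 - e)) / k := by
        have h1 : R - a (n + 1) ≤ R - (1 - e) / ((k:ℝ) - n) * R := by linarith
        have h2 : R - (1 - e) / ((k:ℝ) - n) * R = R * ((((k:ℝ) - n) - (1 - e)) / ((k:ℝ) - n)) := by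
          field_simp
        rw [h2] at h1
        have h3 : R * ((((k:ℝ) - n) - (1 - e)) / ((k:ℝ) - n))
            ≤ ((1 + m * e) * ((k:ℝ) - n) / k) * ((((k:ℝ) - n) - (1 - e)) / ((k:ℝ) - n)) :=
          mul_le_mul_of_nonneg_right ihr (div_nonneg hfac1 hDpos.le)
        have h4 : ((1 + m * e) * ((k:ℝ) - n) / k) * ((((k:ℝ) - n) - (1 - e)) / ((k:ℝ) - n))
            = (1 + m * e) * (((k:ℝ) - n) - (1 - e)) / k := by
          field_simp
        rw [h4] at h3
        linarith
      -- lower bound on new residual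
      have hRlo : (1 - m * e) * (((k:ℝ) - n) - (1 + e)) / k ≤ R - a (n + 1) := by
        have h1 : R - (1 + e) / ((k:ℝ) - n) * R ≤ R - a (n + 1) := by linarith
        have h2 : R - (1 + e) / ((k:ℝ) - n) * R = R * ((((k:ℝ) - n) - (1 + e)) / ((k:ℝ) - n)) := by
          field_simp
        rw [h2] at h1
        have h3 : ((1 - m * e) * ((k:ℝ) - n) / k) * ((((k:ℝ) - n) - (1 + e)) / ((k:ℝ) - n))
            ≤ R * ((((k:ℝ) - n) - (1 + e)) / ((k:ℝ) - n)) :=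
          mul_le_mul_of_nonneg_right ihl (div_nonneg hfac2 hDpos.le)
        have h4 : ((1 - m * e) * ((k:ℝ) - n) / k) * ((((k:ℝ) - n) - (1 + e)) / ((k:ℝ) - n))
            = (1 - m * e) * (((k:ℝ) - n) - (1 + e)) / k := by
          field_simp
        rw [h4] at h3
        linarith
      have hpowsucc : (2:ℝ) ^ (n + 1) - 1 = 2 * m + 1 := by rw [hm]; ring
      rw [hpowsucc]
      have hDnew : (k:ℝ) - ((n:ℝ) + 1) = ((k:ℝ) - n) - 1 := by ring
      rw [hDnew]
      constructor
      · refine le_trans ?_ hRlo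
        rw [div_le_div_iff_of_pos_right hkR]
        exact key_lo m e ((k:ℝ) - n) hm0 hepos he1 hDge
      · refine le_trans hRup ?_
        rw [div_le_div_iff_of_pos_right hkR]
        exact key_up m e ((k:ℝ) - n) hm0 hepos he1 hDge
  -- main argument
  intro j hj
  obtain ⟨hj1, hjk⟩ := Finset.mem_Icc.mp hj
  have hsub : (j - 1) + 1 = j := Nat.sub_add_cancel hj1
  obtain ⟨hL, hU⟩ := aux (j - 1) (by omega)
  obtain ⟨hl, hr⟩ := hrec j hj
  have hcast : ((j - 1 : ℕ) : ℝ) = (j:ℝ) - 1 := by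
    have := Nat.cast_sub hj1 (R := ℝ); simpa using this
  rw [hcast] at hL hU
  have hDeq : (k:ℝ) - ((j:ℝ) - 1) = (k:ℝ) - j + 1 := by ring
  rw [hDeq] at hL hU
  have hjkR : (j:ℝ) ≤ k := by exact_mod_cast hjk
  have hj1R : (1:ℝ) ≤ j := by exact_mod_cast hj1
  set D : ℝ := (k:ℝ) - j + 1 with hD
  clear_value D
  have hDpos : 0 < D := by rw [hD]; linarith
  set R : ℝ := 1 - ∑ i ∈ Finset.Icc 1 (j - 1), a i with hR
  clear_value R
  set m : ℝ := (2:ℝ) ^ (j - 1) - 1 with hm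
  clear_value m
  have hm0 : 0 ≤ m := by
    have : (1:ℝ) ≤ 2 ^ (j - 1) := one_le_pow₀ (by norm_num)
    rw [hm]; linarith
  have hpowle : ((2:ℝ) ^ (j - 1)) * 2 ≤ 2 ^ k := by
    have h1 : ((2:ℝ) ^ (j - 1)) * 2 = 2 ^ ((j - 1) + 1) := by rw [pow_succ]
    rw [h1, hsub]
    exact pow_le_pow_right₀ (by norm_num) hjk
  have hm1e : 2 * ((m + 1) * e) ≤ ε := by
    have h2 := mul_le_mul_of_nonneg_right hpowle hepos.le
    have h1 : 2 * ((m + 1) * e) = (2:ℝ) ^ (j - 1) * 2 * e := by rw [hm]; ring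
    rw [h1]; linarith [heε]
  have h2m1e : (2 * m + 1) * e < ε := by
    have h1 : (2 * m + 1) * e = 2 * ((m + 1) * e) - e := by ring
    rw [h1]; linarith
  have hme1 : m * e < 1 := by linarith
  constructor
  · -- lower bound
    have step1 : (1 - e) / D * ((1 - m * e) * D / k) ≤ a j := by
      refine le_trans ?_ hl
      exact mul_le_mul_of_nonneg_left hL (div_nonneg (by linarith) hDpos.le)
    have step2 : (1 - e) / D * ((1 - m * e) * D / k) = (1 - e) * (1 - m * e) / k := by
      field_simp
    rw [step2] at step1
    have key : (1 - ε) / k < (1 - e) * (1 - m * e) / k := by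
      have hnn : 0 ≤ m * e * e := mul_nonneg (mul_nonneg hm0 hepos.le) hepos.le
      have hme0 : 0 ≤ m * e := mul_nonneg hm0 hepos.le
      have hexp : (1 - e) * (1 - m * e) = 1 - e - m * e + m * e * e := by ring
      rw [div_lt_div_iff_of_pos_right hkR, hexp]
      linarith
    linarith
  · -- upper bound
    have step1 : a j ≤ (1 + e) / D * ((1 + m * e) * D / k) := by
      refine le_trans hr ?_
      exact mul_le_mul_of_nonneg_left hU (div_nonneg (by linarith) hDpos.le)
    have step2 : (1 + e) / D * ((1 + m * e) * D / k) = (1 + e) * (1 + m * e) / k := by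
      field_simp
    rw [step2] at step1
    have key : (1 + e) * (1 + m * e) / k < (1 + ε) / k := by
      have hme0 : 0 ≤ m * e := mul_nonneg hm0 hepos.le
      have hme2 : m * e * e ≤ m * e := by
        have := mul_le_mul_of_nonneg_left he1.le hme0
        simpa using this
      have hexp : (1 + e) * (1 + m * e) = 1 + e + m * e + m * e * e := by ring
      rw [div_lt_div_iff_of_pos_right hkR, hexp]
      linarith
    linarith
end

section
/- A binary necklace with m beads (m₁ of color 1 and m₂ of color 2, with k | m₁ and k | m₂) always admits a fair division among k agents using at most 2(k−1) cuts: there exists a partition of positions {1,…,m} into at most 2k−1 contiguous intervals and an assignment of intervals to agents such that each agent receives exactly m₁/k beads of color 1 and m₂/k of color 2. -/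
open Finset

private lemma nsplit (p : ℕ → Prop) [DecidablePred p] {t L m : ℕ} (h1 : t + L ≤ m) :
    ((range m).filter p).card
      = ((range t).filter p).card + ((Ico t (t + L)).filter p).card
        + ((Ico (t + L) m).filter p).card := by
  have hu1 : Ico 0 t ∪ Ico t (t + L) = Ico 0 (t + L) :=
    Ico_union_Ico_eq_Ico (Nat.zero_le t) (Nat.le_add_right t L)
  have hu2 : Ico 0 (t + L) ∪ Ico (t + L) m = Ico 0 m :=
    Ico_union_Ico_eq_Ico (Nat.zero_le _) h1
  have hd1 : Disjoint ((Ico 0 t).filter p) ((Ico t (t + L)).filter p) :=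
    disjoint_filter_filter (Ico_disjoint_Ico_consecutive 0 t (t + L))
  have hd2 : Disjoint ((Ico 0 t ∪ Ico t (t + L)).filter p) ((Ico (t + L) m).filter p) := by
    rw [hu1]
    exact disjoint_filter_filter (Ico_disjoint_Ico_consecutive 0 (t + L) m)
  simp only [range_eq_Ico]
  rw [← hu2, ← hu1, filter_union, card_union_of_disjoint hd2, filter_union,
    card_union_of_disjoint hd1]

private lemma nshift (p : ℕ → Prop) [DecidablePred p] (a b L : ℕ) :
    ((Ico a b).filter (fun j => p (j + L))).card = ((Ico (a + L) (b + L)).filter p).card := by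
  rw [← Finset.map_add_right_Ico a b L, Finset.filter_map, card_map]
  rfl

private lemma ivt_up (g : ℕ → ℕ) (h : ∀ n, g (n + 1) ≤ g n + 1) :
    ∀ d a v, g a ≤ v → v ≤ g (a + d) → ∃ t, a ≤ t ∧ t ≤ a + d ∧ g t = v := by
  intro d
  induction d with
  | zero => exact fun a v h1 h2 => ⟨a, le_refl a, Nat.le_add_right a 0, le_antisymm h1 h2⟩
  | succ d IH =>
    intro a v h1 h2
    by_cases hc : g (a + 1) ≤ v
    · obtain ⟨t, ht1, ht2, ht3⟩ := IH (a + 1) v hc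
        (by rw [show a + 1 + d = a + (d + 1) from by omega]; exact h2)
      exact ⟨t, by omega, by omega, ht3⟩
    · exact ⟨a, le_refl a, by omega, by have := h a; omega⟩

private lemma ivt_down (g : ℕ → ℕ) (h : ∀ n, g n ≤ g (n + 1) + 1) {a b v : ℕ}
    (hab : a ≤ b) (h1 : v ≤ g a) (h2 : g b ≤ v) : ∃ t, a ≤ t ∧ t ≤ b ∧ g t = v := by
  have h' : ∀ n, g (b - (n + 1)) ≤ g (b - n) + 1 := by
    intro n
    rcases Nat.lt_or_ge n b with hn | hn
    · have he : b - (n + 1) + 1 = b - n := by omega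
      have := h (b - (n + 1))
      rw [he] at this
      exact this
    · have he : b - (n + 1) = b - n := by omega
      rw [he]
      omega
  obtain ⟨t, ht1, ht2, ht3⟩ := ivt_up (fun n => g (b - n)) h' (b - a) 0 v
    (by show g (b - 0) ≤ v; simpa using h2)
    (by show v ≤ g (b - (0 + (b - a))); rw [Nat.zero_add, Nat.sub_sub_self hab]; exact h1)
  exact ⟨b - t, by omega, by omega, ht3⟩

private lemma win_le_succ (p : ℕ → Prop) [DecidablePred p] (L t : ℕ) :
    ((Ico (t + 1) (t + 1 + L)).filter p).card ≤ ((Ico t (t + L)).filter p).card + 1 := by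
  have hsub : (Ico (t + 1) (t + 1 + L)).filter p ⊆ insert (t + L) ((Ico t (t + L)).filter p) := by
    intro j hj
    rw [mem_filter, mem_Ico] at hj
    obtain ⟨⟨h1, h2⟩, hp⟩ := hj
    rw [mem_insert, mem_filter, mem_Ico]
    by_cases hj' : j = t + L
    · exact Or.inl hj'
    · exact Or.inr ⟨⟨by omega, by omega⟩, hp⟩
  calc ((Ico (t + 1) (t + 1 + L)).filter p).card
      ≤ (insert (t + L) ((Ico t (t + L)).filter p)).card := card_le_card hsub
    _ ≤ ((Ico t (t + L)).filter p).card + 1 := card_insert_le _ _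

private lemma succ_le_win (p : ℕ → Prop) [DecidablePred p] (L t : ℕ) :
    ((Ico t (t + L)).filter p).card ≤ ((Ico (t + 1) (t + 1 + L)).filter p).card + 1 := by
  have hsub : (Ico t (t + L)).filter p ⊆ insert t ((Ico (t + 1) (t + 1 + L)).filter p) := by
    intro j hj
    rw [mem_filter, mem_Ico] at hj
    obtain ⟨⟨h1, h2⟩, hp⟩ := hj
    rw [mem_insert, mem_filter, mem_Ico]
    by_cases hj' : j = t
    · exact Or.inl hj'
    · exact Or.inr ⟨⟨by omega, by omega⟩, hp⟩
  calc ((Ico t (t + L)).filter p).card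
      ≤ (insert t ((Ico (t + 1) (t + 1 + L)).filter p)).card := card_le_card hsub
    _ ≤ ((Ico (t + 1) (t + 1 + L)).filter p).card + 1 := card_insert_le _ _

private lemma win_sum (p : ℕ → Prop) [DecidablePred p] (L : ℕ) :
    ∀ n, ∑ j ∈ range n, ((Ico (j * L) (j * L + L)).filter p).card
      = ((range (n * L)).filter p).card := by
  intro n
  induction n with
  | zero => simp
  | succ n IH =>
    rw [Finset.sum_range_succ, IH]
    have he : (n + 1) * L = n * L + L := by ring
    rw [he, nsplit p (t := n * L) (L := L) (m := n * L + L) (le_refl _), Ico_self,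
      filter_empty, card_empty, Nat.add_zero]

private lemma fin2_cases (x : Fin 2) : x = 0 ∨ x = 1 := by omega

private lemma necklace_main : ∀ k : ℕ, 0 < k → ∀ (m : ℕ) (S : ℕ → Fin 2),
    (∀ i : Fin 2, k ∣ ((Finset.range m).filter (fun j => S j = i)).card) →
    ∃ owner : ℕ → Fin k,
      ((Finset.range (m - 1)).filter (fun j => owner j ≠ owner (j + 1))).card
        ≤ 2 * (k - 1) ∧
      ∀ (a : Fin k) (i : Fin 2),
        ((Finset.range m).filter (fun j => owner j = a ∧ S j = i)).card
          = ((Finset.range m).filter (fun j => S j = i)).card / k := by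
  intro k
  induction k with
  | zero => omega
  | succ k IH =>
    intro _ m S hdvd
    rcases Nat.eq_zero_or_pos k with rfl | hk
    · -- base case: one agent
      refine ⟨fun _ => 0, by simp, ?_⟩
      intro a i
      have ha : a = 0 := Fin.eq_zero a
      subst ha
      simp
    · -- inductive step
      obtain ⟨q0, hq0⟩ := hdvd 0
      obtain ⟨q1, hq1⟩ := hdvd 1
      set L := q0 + q1 with hL
      have hx2 : ∀ x : Fin 2, ¬x = 0 ↔ x = 1 := by decide
      have h01 : ((range m).filter (fun j => S j = (0 : Fin 2))).card
          + ((range m).filter (fun j => S j = (1 : Fin 2))).card = m := by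
        have hsp := Finset.card_filter_add_card_filter_not
          (s := range m) (p := fun j => S j = (0 : Fin 2))
        rw [filter_congr (fun j _ => hx2 (S j))] at hsp
        rw [hsp, card_range]
      have hm : m = (k + 1) * L := by
        calc m = ((range m).filter (fun j => S j = (0 : Fin 2))).card
              + ((range m).filter (fun j => S j = (1 : Fin 2))).card := h01.symm
          _ = (k + 1) * q0 + (k + 1) * q1 := by rw [hq0, hq1]
          _ = (k + 1) * L := by rw [hL]; ring
      -- the window-count function
      obtain ⟨f, hf⟩ : ∃ f : ℕ → ℕ, ∀ n,
          f n = ((Ico n (n + L)).filter (fun j => S j = (0 : Fin 2))).card :=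
        ⟨_, fun _ => rfl⟩
      have hf1 : ∀ n, f (n + 1) ≤ f n + 1 := by
        intro n; rw [hf, hf]; exact win_le_succ _ L n
      have hf2 : ∀ n, f n ≤ f (n + 1) + 1 := by
        intro n; rw [hf, hf]; exact succ_le_win _ L n
      have hsum : ∑ j ∈ range (k + 1), f (j * L) = (k + 1) * q0 := by
        have h1 : ∑ j ∈ range (k + 1), f (j * L)
            = ∑ j ∈ range (k + 1),
                ((Ico (j * L) (j * L + L)).filter (fun j => S j = (0 : Fin 2))).card :=
          Finset.sum_congr rfl (fun j _ => hf _)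
        rw [h1, win_sum, ← hm, hq0]
      have hlow : ∃ j ∈ range (k + 1), f (j * L) ≤ q0 := by
        apply Finset.exists_le_of_sum_le ⟨0, mem_range.mpr (Nat.succ_pos k)⟩
        rw [hsum, Finset.sum_const, card_range, smul_eq_mul]
      have hhigh : ∃ j ∈ range (k + 1), q0 ≤ f (j * L) := by
        apply Finset.exists_le_of_sum_le (f := fun _ => q0) ⟨0, mem_range.mpr (Nat.succ_pos k)⟩
        rw [hsum, Finset.sum_const, card_range, smul_eq_mul]
      obtain ⟨j1, hj1, hj1f⟩ := hlow
      obtain ⟨j2, hj2, hj2f⟩ := hhigh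
      rw [mem_range] at hj1 hj2
      have hex : ∃ t, t ≤ k * L ∧ f t = q0 := by
        rcases le_total j1 j2 with h12 | h12
        · have hL12 : j1 * L ≤ j2 * L := Nat.mul_le_mul_right L h12
          obtain ⟨t, ht1, ht2, ht3⟩ := ivt_up f hf1 (j2 * L - j1 * L) (j1 * L) q0 hj1f
            (by rw [show j1 * L + (j2 * L - j1 * L) = j2 * L from by omega]; exact hj2f)
          refine ⟨t, ?_, ht3⟩
          have : j2 * L ≤ k * L := Nat.mul_le_mul_right L (by omega)
          omega
        · have hL12 : j2 * L ≤ j1 * L := Nat.mul_le_mul_right L h12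
          obtain ⟨t, ht1, ht2, ht3⟩ := ivt_down f hf2 hL12 hj2f hj1f
          refine ⟨t, ?_, ht3⟩
          have : j1 * L ≤ k * L := Nat.mul_le_mul_right L (by omega)
          omega
      obtain ⟨t, htk, htf⟩ := hex
      set m' := k * L with hm'
      have hmm' : m = m' + L := by rw [hm, hm']; ring
      have htL : t + L ≤ m := by omega
      have htm' : t ≤ m' := htk
      -- window counts
      have hw0 : ((Ico t (t + L)).filter (fun j => S j = (0 : Fin 2))).card = q0 := by
        rw [← hf]; exact htf
      have hw1 : ((Ico t (t + L)).filter (fun j => S j = (1 : Fin 2))).card = q1 := by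
        have hsp := Finset.card_filter_add_card_filter_not
          (s := Ico t (t + L)) (p := fun j => S j = (0 : Fin 2))
        rw [filter_congr (fun j _ => hx2 (S j)), Nat.card_Ico, hw0] at hsp
        omega
      -- the glued necklace
      obtain ⟨S', hS'lt, hS'ge⟩ : ∃ S' : ℕ → Fin 2,
          (∀ j, j < t → S' j = S j) ∧ (∀ j, t ≤ j → S' j = S (j + L)) :=
        ⟨fun j => if j < t then S j else S (j + L), fun j h => if_pos h,
          fun j h => if_neg (by omega)⟩
      -- counts on the glued necklace
      have hSplit : ∀ (i : Fin 2), ((range m').filter (fun j => S' j = i)).card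
          = ((range t).filter (fun j => S j = i)).card
            + ((Ico (t + L) m).filter (fun j => S j = i)).card := by
        intro i
        have h1 := nsplit (fun j => S' j = i) (t := t) (L := 0) (m := m') (by omega)
        rw [Nat.add_zero, Ico_self, filter_empty, card_empty, Nat.add_zero] at h1
        have h2 : (range t).filter (fun j => S' j = i) = (range t).filter (fun j => S j = i) :=
          filter_congr (fun j hj => by rw [hS'lt j (mem_range.mp hj)])
        have h3 : ((Ico t m').filter (fun j => S' j = i)).card
            = ((Ico (t + L) m).filter (fun j => S j = i)).card := by
          have h4 : (Ico t m').filter (fun j => S' j = i)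
              = (Ico t m').filter (fun j => S (j + L) = i) :=
            filter_congr (fun j hj => by rw [hS'ge j (mem_Ico.mp hj).1])
          rw [h4, nshift (fun j => S j = i) t m' L, ← hmm']
        rw [h1, h2, h3]
      have hcnt : ∀ i : Fin 2,
          ((range m).filter (fun j => S j = i)).card
            = ((range t).filter (fun j => S j = i)).card
              + ((Ico t (t + L)).filter (fun j => S j = i)).card
              + ((Ico (t + L) m).filter (fun j => S j = i)).card :=
        fun i => nsplit (fun j => S j = i) htL
      have e0 : ((range m').filter (fun j => S' j = (0 : Fin 2))).card = k * q0 := by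
        have h1 := hSplit 0
        have h2 := hcnt 0
        have h3 : ((range m).filter (fun j => S j = (0 : Fin 2))).card = k * q0 + q0 := by
          rw [hq0]; ring
        rw [h3, hw0] at h2
        omega
      have e1 : ((range m').filter (fun j => S' j = (1 : Fin 2))).card = k * q1 := by
        have h1 := hSplit 1
        have h2 := hcnt 1
        have h3 : ((range m).filter (fun j => S j = (1 : Fin 2))).card = k * q1 + q1 := by
          rw [hq1]; ring
        rw [h3, hw1] at h2
        omega
      have hdvd' : ∀ i : Fin 2, k ∣ ((range m').filter (fun j => S' j = i)).card := by
        intro i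
        rcases fin2_cases i with rfl | rfl
        · exact ⟨q0, e0⟩
        · exact ⟨q1, e1⟩
      obtain ⟨owner', hcut', hcount'⟩ := IH hk m' S' hdvd'
      -- the combined owner function
      obtain ⟨owner, ho1, ho2, ho3⟩ : ∃ owner : ℕ → Fin (k + 1),
          (∀ j, j < t → owner j = (owner' j).castSucc) ∧
          (∀ j, t ≤ j → j < t + L → owner j = Fin.last k) ∧
          (∀ j, t + L ≤ j → owner j = (owner' (j - L)).castSucc) :=
        ⟨fun j => if j < t then (owner' j).castSucc
            else if j < t + L then Fin.last k else (owner' (j - L)).castSucc,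
          fun j h => if_pos h,
          fun j h1 h2 => by dsimp only; rw [if_neg (by omega), if_pos h2],
          fun j h => by dsimp only; rw [if_neg (by omega), if_neg (by omega)]⟩
      refine ⟨owner, ?_, ?_⟩
      · -- cut bound
        have key : ∀ j ∈ ((range (m - 1)).filter (fun j => owner j ≠ owner (j + 1)))
              \ ({t - 1, t + L - 1} : Finset ℕ),
            (j + 1 < t ∧ owner' j ≠ owner' (j + 1)) ∨
            (t + L ≤ j ∧ j < m - 1 ∧ owner' (j - L) ≠ owner' (j - L + 1)) := by
          intro j hj
          rw [mem_sdiff, mem_filter, mem_range, mem_insert, mem_singleton] at hj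
          obtain ⟨⟨hjm, hne⟩, hD⟩ := hj
          push_neg at hD
          obtain ⟨hD1, hD2⟩ := hD
          by_cases hjt : j < t
          · left
            have hj1t : j + 1 < t := by omega
            refine ⟨hj1t, fun h => hne ?_⟩
            rw [ho1 j hjt, ho1 (j + 1) (by omega), h]
          · by_cases hjtl : j < t + L
            · exfalso
              apply hne
              rw [ho2 j (by omega) hjtl, ho2 (j + 1) (by omega) (by omega)]
            · right
              refine ⟨by omega, hjm, fun h => hne ?_⟩
              rw [ho3 j (by omega), ho3 (j + 1) (by omega),
                show j + 1 - L = j - L + 1 from by omega, h]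
        have hmaps : ∀ j ∈ ((range (m - 1)).filter (fun j => owner j ≠ owner (j + 1)))
              \ ({t - 1, t + L - 1} : Finset ℕ),
            (if j < t then j else j - L)
              ∈ (range (m' - 1)).filter (fun j => owner' j ≠ owner' (j + 1)) := by
          intro j hj
          rcases key j hj with ⟨h1, h2⟩ | ⟨h1, h1', h2⟩
          · rw [if_pos (by omega), mem_filter, mem_range]
            exact ⟨by omega, h2⟩
          · rw [if_neg (by omega), mem_filter, mem_range]
            exact ⟨by omega, h2⟩
        have hinj : Set.InjOn (fun j => if j < t then j else j - L)
            ↑(((range (m - 1)).filter (fun j => owner j ≠ owner (j + 1)))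
              \ ({t - 1, t + L - 1} : Finset ℕ)) := by
          intro x hx y hy hxy
          rw [Finset.mem_coe] at hx hy
          simp only at hxy
          rcases key x hx with ⟨kx, -⟩ | ⟨kx, -, -⟩ <;>
            rcases key y hy with ⟨ky, -⟩ | ⟨ky, -, -⟩ <;>
            split_ifs at hxy <;> omega
        have hC : (((range (m - 1)).filter (fun j => owner j ≠ owner (j + 1)))
              \ ({t - 1, t + L - 1} : Finset ℕ)).card
            ≤ ((range (m' - 1)).filter (fun j => owner' j ≠ owner' (j + 1))).card :=
          Finset.card_le_card_of_injOn _ hmaps hinj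
        have hD2 : ({t - 1, t + L - 1} : Finset ℕ).card ≤ 2 := by
          apply le_trans (card_insert_le _ _)
          simp
        have htot := Finset.card_le_card_sdiff_add_card
          (s := (range (m - 1)).filter (fun j => owner j ≠ owner (j + 1)))
          (t := ({t - 1, t + L - 1} : Finset ℕ))
        omega
      · -- fair counts
        intro a i
        obtain ⟨qi, hqi1, hqi2, hqi3⟩ : ∃ qi,
            ((range m).filter (fun j => S j = i)).card = (k + 1) * qi ∧
            ((Ico t (t + L)).filter (fun j => S j = i)).card = qi ∧
            ((range m').filter (fun j => S' j = i)).card = k * qi := by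
          rcases fin2_cases i with rfl | rfl
          · exact ⟨q0, hq0, hw0, e0⟩
          · exact ⟨q1, hq1, hw1, e1⟩
        have hdivq : ((range m).filter (fun j => S j = i)).card / (k + 1) = qi := by
          rw [hqi1]; exact Nat.mul_div_cancel_left _ (Nat.succ_pos k)
        rw [hdivq]
        have hsp := nsplit (fun j => owner j = a ∧ S j = i) htL
        rcases Fin.eq_castSucc_or_eq_last a with ⟨b, rfl⟩ | rfl
        · -- a = castSucc b
          have X2 : ((Ico t (t + L)).filter (fun j => owner j = b.castSucc ∧ S j = i)).card
              = 0 := by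
            rw [card_eq_zero, filter_eq_empty_iff]
            intro j hj
            rw [mem_Ico] at hj
            rintro ⟨h1, -⟩
            rw [ho2 j hj.1 hj.2] at h1
            exact absurd h1.symm (ne_of_lt (Fin.castSucc_lt_last b))
          have X1 : (range t).filter (fun j => owner j = b.castSucc ∧ S j = i)
              = (range t).filter (fun j => owner' j = b ∧ S' j = i) := by
            apply filter_congr
            intro j hj
            rw [mem_range] at hj
            rw [ho1 j hj, Fin.castSucc_inj, hS'lt j hj]
          have X3 : ((Ico (t + L) m).filter (fun j => owner j = b.castSucc ∧ S j = i)).card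
              = ((Ico t m').filter (fun j => owner' j = b ∧ S' j = i)).card := by
            rw [show ((Ico t m').filter (fun j => owner' j = b ∧ S' j = i))
                = ((Ico t m').filter
                    (fun j => owner (j + L) = b.castSucc ∧ S (j + L) = i)) from
              filter_congr (fun j hj => by
                rw [mem_Ico] at hj
                rw [ho3 (j + L) (by omega), show j + L - L = j from by omega,
                  Fin.castSucc_inj, hS'ge j hj.1]),
              nshift (fun j => owner j = b.castSucc ∧ S j = i) t m' L, ← hmm']
          have hYsplit := nsplit (fun j => owner' j = b ∧ S' j = i) (t := t) (L := 0)
            (m := m') (by omega)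
          rw [Nat.add_zero, Ico_self, filter_empty, card_empty, Nat.add_zero] at hYsplit
          have hcb := hcount' b i
          rw [hqi3, Nat.mul_div_cancel_left _ hk] at hcb
          rw [hsp, X1, X2, X3]
          omega
        · -- a = last
          have X1 : ((range t).filter (fun j => owner j = Fin.last k ∧ S j = i)).card = 0 := by
            rw [card_eq_zero, filter_eq_empty_iff]
            intro j hj
            rw [mem_range] at hj
            rintro ⟨h1, -⟩
            rw [ho1 j hj] at h1
            exact absurd h1 (ne_of_lt (Fin.castSucc_lt_last _))
          have X3 : ((Ico (t + L) m).filter (fun j => owner j = Fin.last k ∧ S j = i)).card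
              = 0 := by
            rw [card_eq_zero, filter_eq_empty_iff]
            intro j hj
            rw [mem_Ico] at hj
            rintro ⟨h1, -⟩
            rw [ho3 j hj.1] at h1
            exact absurd h1 (ne_of_lt (Fin.castSucc_lt_last _))
          have X2 : (Ico t (t + L)).filter (fun j => owner j = Fin.last k ∧ S j = i)
              = (Ico t (t + L)).filter (fun j => S j = i) := by
            apply filter_congr
            intro j hj
            rw [mem_Ico] at hj
            rw [ho2 j hj.1 hj.2]
            simp
          rw [hsp, X1, X2, hqi2, X3]
          omega

/-- Two-color necklace splitting: a binary necklace whose color counts are each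
divisible by k admits a fair division among k agents with at most 2(k−1) cuts. -/
theorem two_color_necklace_splitting (m k : ℕ) (hk : 0 < k) (S : ℕ → Fin 2)
    (hdvd : ∀ i : Fin 2, k ∣ ((Finset.range m).filter (fun j => S j = i)).card) :
    ∃ owner : ℕ → Fin k,
      ((Finset.range (m - 1)).filter (fun j => owner j ≠ owner (j + 1))).card
        ≤ 2 * (k - 1) ∧
      ∀ (a : Fin k) (i : Fin 2),
        ((Finset.range m).filter (fun j => owner j = a ∧ S j = i)).card
          = ((Finset.range m).filter (fun j => S j = i)).card / k := by
  exact necklace_main k hk m S hdvd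
end

section
/- Suppose a binary necklace of length m (with k | m₁ and k | m₂) is fairly divided among k agents with at most 2(k−1) cuts via the greedy offline algorithm, and two adjacent beads of different colors belonging to two different agents are swapped. Then there exists a fair division of the modified necklace among the k agents with at most 2(k−1) cuts that agrees with the original division on all beads not belonging to those two agents. -/
set_option linter.unusedSectionVars false
set_option maxHeartbeats 1000000

open Finset

/-- `owner` has the structure of an allocation produced by the greedy offline
algorithm (up to order of interval selection): there is an order of the agents
such that each agent's beads form a contiguous interval in the subsequence
remaining after removing the beads of earlier agents. -/
def GreedyStructure (k : ℕ) (owner : ℕ → Fin k) : Prop :=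
  ∃ ord : Fin k → Fin k, Function.Bijective ord ∧
    ∀ (t : Fin k) (p q r : ℕ), p < r → r < q →
      owner p = ord t → owner q = ord t →
      owner r = ord t ∨ ∃ s : Fin k, s < t ∧ owner r = ord s


namespace SwapAux
open List

variable {γ : Type*} [DecidableEq γ]

/-- count of adjacent pairs satisfying `P` -/
def pc (P : γ → γ → Bool) : List γ → ℕ
  | a :: b :: t => (if P a b then 1 else 0) + pc P (b :: t)
  | _ => 0

variable {P : γ → γ → Bool}

@[simp] lemma pc_nil : pc P [] = 0 := rfl
@[simp] lemma pc_single (a : γ) : pc P [a] = 0 := rfl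
lemma pc_cons₂ (a b : γ) (t : List γ) :
    pc P (a :: b :: t) = (if P a b then 1 else 0) + pc P (b :: t) := rfl

lemma pc_split : ∀ (U : List γ) (a : γ) (V : List γ),
    pc P (U ++ a :: V) = pc P (U ++ [a]) + pc P (a :: V) := by
  intro U
  induction U with
  | nil => intro a V; simp [pc]
  | cons u U ih =>
    intro a V
    cases U with
    | nil =>
      show pc P (u :: a :: V) = pc P [u, a] + pc P (a :: V)
      rw [pc_cons₂]
      have : pc P [u, a] = (if P u a then 1 else 0) := by simp [pc_cons₂]
      rw [this]
    | cons u' U' =>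
      have h1 : (u :: u' :: U') ++ a :: V = u :: ((u' :: U') ++ a :: V) := rfl
      have h2 : (u :: u' :: U') ++ [a] = u :: ((u' :: U') ++ [a]) := rfl
      rw [h1, h2]
      show (if P u u' then 1 else 0) + pc P ((u' :: U') ++ a :: V)
          = ((if P u u' then 1 else 0) + pc P ((u' :: U') ++ [a])) + pc P (a :: V)
      rw [ih a V]; ring

lemma pc_concat (U : List γ) (u a : γ) :
    pc P ((U ++ [u]) ++ [a]) = pc P (U ++ [u]) + (if P u a then 1 else 0) := by
  have h : (U ++ [u]) ++ [a] = U ++ u :: [a] := by simp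
  rw [h, pc_split U u [a]]
  have : pc P (u :: [a]) = (if P u a then 1 else 0) := by simp [pc_cons₂]
  rw [this]

lemma pc_const_block {X : γ} (hP : P X X = false) :
    ∀ (B : List γ), B ≠ [] → (∀ b ∈ B, b = X) → ∀ V, pc P (B ++ V) = pc P (X :: V) := by
  intro B
  induction B with
  | nil => intro h; exact absurd rfl h
  | cons b B ih =>
    intro _ hall V
    have hb : b = X := hall b (by simp)
    cases B with
    | nil => simp [hb]
    | cons b' B' =>
      have hb' : b' = X := hall b' (by simp)
      have h1 : (b :: b' :: B') ++ V = b :: b' :: (B' ++ V) := rfl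
      rw [h1, pc_cons₂, hb, hb', hP]
      simp only [Bool.false_eq_true, if_false, Nat.zero_add]
      have h2 : (b' :: B') ++ V = b' :: (B' ++ V) := rfl
      have h3 := ih (by simp) (fun x hx => hall x (by simp [List.mem_cons] at hx ⊢; tauto)) V
      rw [h2, hb'] at h3
      exact h3

/-- greedy (hull) condition on a list -/
def Gr (rk : γ → ℕ) (O : List γ) : Prop := ∀ a c : γ, [a, c, a] <+ O → rk c ≤ rk a

lemma Gr.sublist {rk : γ → ℕ} {O O' : List γ} (h : O' <+ O) (hg : Gr rk O) : Gr rk O' :=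
  fun a c hs => hg a c (hs.trans h)

lemma first_split {X : γ} : ∀ {O : List γ}, X ∈ O → ∃ U R', O = U ++ X :: R' ∧ X ∉ U := by
  intro O
  induction O with
  | nil => intro h; simp at h
  | cons a l ih =>
    intro h
    by_cases ha : a = X
    · exact ⟨[], l, by rw [ha]; rfl, by simp⟩
    · have hX : X ∈ l := by
        rcases List.mem_cons.1 h with h1 | h1
        · exact absurd h1.symm ha
        · exact h1
      obtain ⟨U, R', h1, h2⟩ := ih hX
      refine ⟨a :: U, R', by rw [h1]; rfl, ?_⟩
      simp only [List.mem_cons, not_or]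
      exact ⟨fun hh => ha hh.symm, h2⟩

lemma take_block (X : γ) : ∀ (R : List γ),
    ∃ Bl V, R = Bl ++ V ∧ (∀ b ∈ Bl, b = X) ∧ V.head? ≠ some X := by
  intro R
  induction R with
  | nil => exact ⟨[], [], rfl, by simp, by simp⟩
  | cons a l ih =>
    by_cases ha : a = X
    · obtain ⟨Bl, V, h1, h2, h3⟩ := ih
      refine ⟨a :: Bl, V, by rw [h1]; rfl, ?_, h3⟩
      intro b hb
      rcases List.mem_cons.1 hb with h | h
      · rw [h, ha]
      · exact h2 b h
    · refine ⟨[], a :: l, rfl, by simp, by simp [ha]⟩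

lemma exists_decomp {rk : γ → ℕ} {O : List γ} (hg : Gr rk O)
    (hinj : Function.Injective rk) (hO : O ≠ []) :
    ∃ (X : γ) (U Bl V : List γ), O = U ++ Bl ++ V ∧ Bl ≠ [] ∧ (∀ b ∈ Bl, b = X) ∧
      X ∉ U ∧ X ∉ V := by
  have hne : O.toFinset.Nonempty := by
    cases O with
    | nil => exact absurd rfl hO
    | cons a l => exact ⟨a, by simp⟩
  obtain ⟨X, hXmem, hXmin⟩ := O.toFinset.exists_min_image rk hne
  rw [List.mem_toFinset] at hXmem
  obtain ⟨U, R', hO1, hXU⟩ := first_split hXmem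
  obtain ⟨Bl', V, hR1, hBl'all, hVhead⟩ := take_block X R'
  refine ⟨X, U, X :: Bl', V, ?_, by simp, ?_, hXU, ?_⟩
  · rw [hO1, hR1]; simp
  · intro b hb
    rcases List.mem_cons.1 hb with h | h
    · exact h
    · exact hBl'all b h
  · -- X ∉ V via greedy
    intro hXinV
    have hVne : V ≠ [] := by intro h; rw [h] at hXinV; simp at hXinV
    obtain ⟨v, V', hVv⟩ := List.exists_cons_of_ne_nil hVne
    have hvne : v ≠ X := by
      intro h
      apply hVhead
      rw [hVv, h]; rfl
    have hXV' : X ∈ V' := by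
      rcases List.mem_cons.1 (hVv ▸ hXinV) with h | h
      · exact absurd h.symm hvne
      · exact h
    have s1 : [X] <+ V' := List.singleton_sublist.2 hXV'
    have s2 : [v, X] <+ v :: V' := s1.cons₂ v
    have s4 : [v, X] <+ Bl' ++ (v :: V') := s2.trans (List.sublist_append_right _ _)
    have s5 : [X, v, X] <+ X :: (Bl' ++ (v :: V')) := s4.cons₂ X
    have s7 : [X, v, X] <+ O := by
      have heq : O = U ++ (X :: (Bl' ++ (v :: V'))) := by
        rw [hO1, hR1, hVv]
      rw [heq]
      exact s5.trans (List.sublist_append_right _ _)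
    have hle : rk v ≤ rk X := hg X v s7
    have hge : rk X ≤ rk v := by
      apply hXmin
      rw [List.mem_toFinset, hO1, hR1, hVv]
      simp
    exact hvne (hinj (le_antisymm hle hge))


lemma card_decomp {O U Bl V : List γ} {X : γ} (hO : O = U ++ Bl ++ V) (hBlne : Bl ≠ [])
    (hall : ∀ b ∈ Bl, b = X) (hXU : X ∉ U) (hXV : X ∉ V) :
    O.toFinset.card = (U ++ V).toFinset.card + 1 := by
  have hXBl : X ∈ Bl := by
    obtain ⟨b, Bl', rfl⟩ := List.exists_cons_of_ne_nil hBlne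
    have := hall b (by simp)
    rw [← this]; simp
  have h1 : O.toFinset = insert X (U ++ V).toFinset := by
    ext y
    simp only [hO, List.toFinset_append, Finset.mem_union, Finset.mem_insert,
      List.mem_toFinset]
    constructor
    · rintro ((h | h) | h)
      · exact Or.inr (Or.inl h)
      · exact Or.inl (hall y h)
      · exact Or.inr (Or.inr h)
    · rintro (rfl | h | h)
      · exact Or.inl (Or.inr hXBl)
      · exact Or.inl (Or.inl h)
      · exact Or.inr h
  rw [h1, Finset.card_insert_of_notMem]
  simp only [List.toFinset_append, Finset.mem_union, List.mem_toFinset]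
  tauto

lemma pc_decomp {P : γ → γ → Bool} {O U Bl V : List γ} {X : γ} (hP : P X X = false)
    (hO : O = U ++ Bl ++ V) (hBlne : Bl ≠ []) (hall : ∀ b ∈ Bl, b = X) :
    pc P O = pc P (U ++ [X]) + pc P (X :: V) := by
  obtain ⟨b, Bl', rfl⟩ := List.exists_cons_of_ne_nil hBlne
  have hb : b = X := hall b (by simp)
  subst hb
  have h1 : O = U ++ b :: (Bl' ++ V) := by rw [hO]; simp
  rw [h1, pc_split]
  congr 1
  have h2 : b :: (Bl' ++ V) = (b :: Bl') ++ V := rfl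
  rw [h2]
  exact pc_const_block hP _ (by simp) hall V

section Main
variable {rk : γ → ℕ}

lemma G' (hinj : Function.Injective rk) :
    ∀ N (O : List γ), O.length ≤ N → Gr rk O → O ≠ [] →
      pc (fun a b => decide (a ≠ b)) O + 2 ≤ 2 * O.toFinset.card := by
  intro N
  induction N with
  | zero => intro O hlen _ hO; interval_cases h : O.length; · exact absurd (List.length_eq_zero_iff.1 h) hO
  | succ N ih =>
    intro O hlen hg hO
    obtain ⟨X, U, Bl, V, hOd, hBlne, hall, hXU, hXV⟩ := exists_decomp hg hinj hO
    have hPX : (fun a b => decide (a ≠ b)) X X = false := by simp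
    have hpcO := pc_decomp (P := fun a b => decide (a ≠ b)) hPX hOd hBlne hall
    have hcard := card_decomp hOd hBlne hall hXU hXV
    have hlenO : U.length + Bl.length + V.length = O.length := by rw [hOd]; simp; omega
    have hBl1 : 1 ≤ Bl.length := List.length_pos_iff.2 hBlne
    have hsubU : U <+ O := by rw [hOd, List.append_assoc]; exact List.sublist_append_left _ _
    have hsubV : V <+ O := by rw [hOd]; exact List.sublist_append_right _ _
    have hsubUV : U ++ V <+ O := by
      rw [hOd, List.append_assoc]
      exact (List.sublist_append_right Bl V).append_left U
    rcases List.eq_nil_or_concat U with hUnil | ⟨U₀, u, hUc⟩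
    · subst hUnil
      cases V with
      | nil =>
        simp only [List.nil_append, pc_single] at hpcO
        simp only [List.nil_append, List.toFinset_nil, Finset.card_empty] at hcard
        omega
      | cons v V' =>
        have hvX : v ≠ X := fun h => hXV (by simp [← h])
        have h1 : pc (fun a b => decide (a ≠ b)) (X :: v :: V') =
            1 + pc (fun a b => decide (a ≠ b)) (v :: V') := by
          rw [pc_cons₂]; simp [Ne.symm hvX]
        have hih := ih (v :: V') (by simp at hlenO ⊢; omega) (hg.sublist hsubV) (by simp)
        simp only [List.nil_append, pc_single] at hpcO
        simp only [List.nil_append] at hcard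
        omega
    · have hUne : U ≠ [] := by rw [hUc]; simp [List.concat_eq_append]
      rw [List.concat_eq_append] at hUc
      have huU : u ∈ U := by rw [hUc]; simp
      have huX : u ≠ X := fun h => hXU (h ▸ huU)
      have h1 : pc (fun a b => decide (a ≠ b)) (U ++ [X]) =
          pc (fun a b => decide (a ≠ b)) U + 1 := by
        rw [hUc, pc_concat]; simp [huX]
      cases V with
      | nil =>
        have hih := ih U (by omega) (hg.sublist hsubU) hUne
        simp only [List.append_nil] at hcard
        simp only [pc_single] at hpcO
        omega
      | cons v V' =>
        have hvX : v ≠ X := fun h => hXV (by simp [← h])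
        have h2 : pc (fun a b => decide (a ≠ b)) (X :: v :: V') =
            1 + pc (fun a b => decide (a ≠ b)) (v :: V') := by
          rw [pc_cons₂]; simp [Ne.symm hvX]
        have h3 : pc (fun a b => decide (a ≠ b)) (U ++ v :: V') =
            pc (fun a b => decide (a ≠ b)) (U ++ [v]) +
            pc (fun a b => decide (a ≠ b)) (v :: V') := pc_split U v V'
        have h4 : pc (fun a b => decide (a ≠ b)) U ≤
            pc (fun a b => decide (a ≠ b)) (U ++ [v]) := by
          rw [hUc, pc_concat]; omega
        have hUVne : U ++ v :: V' ≠ [] := by simp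
        have hih := ih (U ++ v :: V') (by simp at hlenO ⊢; omega) (hg.sublist hsubUV) hUVne
        omega
end Main


section Hard
variable {rk : γ → ℕ} {A B : γ}

/-- the {A,B}-edge predicate -/
def abb (A B : γ) : γ → γ → Bool := fun a b => decide ((a = A ∧ b = B) ∨ (a = B ∧ b = A))

lemma abb_self (hAB : A ≠ B) (x : γ) : abb A B x x = false := by
  simp only [abb, decide_eq_false_iff_not]
  rintro (⟨rfl, rfl⟩ | ⟨rfl, rfl⟩) <;> exact hAB rfl

lemma abb_symm {x y : γ} (h : abb A B x y = true) : abb A B y x = true := by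
  simp [abb] at h ⊢; tauto

lemma H'' (hinj : Function.Injective rk) (hAB : A ≠ B) :
    ∀ N (O : List γ), O.length ≤ N → Gr rk O → pc (abb A B) O = 1 →
      pc (fun a b => decide (a ≠ b)) O + 3 ≤ 2 * O.toFinset.card := by
  intro N
  induction N with
  | zero =>
    intro O hlen _ hab
    have : O = [] := List.length_eq_zero_iff.1 (Nat.le_zero.1 hlen)
    rw [this] at hab; simp at hab
  | succ N ih =>
    intro O hlen hg hab
    have hO : O ≠ [] := by intro h; rw [h] at hab; simp at hab
    obtain ⟨X, U, Bl, V, hOd, hBlne, hall, hXU, hXV⟩ := exists_decomp hg hinj hO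
    have hPX : (fun a b => decide (a ≠ b)) X X = false := by simp
    have hQX : abb A B X X = false := abb_self hAB X
    have hpcO := pc_decomp (P := fun a b => decide (a ≠ b)) hPX hOd hBlne hall
    have hqcO := pc_decomp (P := abb A B) hQX hOd hBlne hall
    have hcard := card_decomp hOd hBlne hall hXU hXV
    have hlenO : U.length + Bl.length + V.length = O.length := by rw [hOd]; simp; omega
    have hBl1 : 1 ≤ Bl.length := List.length_pos_iff.2 hBlne
    have hsubU : U <+ O := by rw [hOd, List.append_assoc]; exact List.sublist_append_left _ _
    have hsubV : V <+ O := by rw [hOd]; exact List.sublist_append_right _ _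
    have hsubUV : U ++ V <+ O := by
      rw [hOd, List.append_assoc]
      exact (List.sublist_append_right Bl V).append_left U
    rcases List.eq_nil_or_concat U with hUnil | ⟨U₀, u, hUc⟩
    · subst hUnil
      cases V with
      | nil =>
        -- O is a constant block: pc abb O = 0, contradiction
        simp only [List.nil_append, pc_single] at hqcO
        omega
      | cons v V' =>
        have hvX : v ≠ X := fun h => hXV (by simp [← h])
        have h1 : pc (fun a b => decide (a ≠ b)) (X :: v :: V') =
            1 + pc (fun a b => decide (a ≠ b)) (v :: V') := by
          rw [pc_cons₂]; simp [Ne.symm hvX]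
        have hih := G' hinj N (v :: V') (by simp at hlenO ⊢; omega) (hg.sublist hsubV) (by simp)
        simp only [List.nil_append, pc_single] at hpcO
        simp only [List.nil_append] at hcard
        omega
    · have hUne : U ≠ [] := by rw [hUc]; simp [List.concat_eq_append]
      rw [List.concat_eq_append] at hUc
      have huU : u ∈ U := by rw [hUc]; simp
      have huX : u ≠ X := fun h => hXU (h ▸ huU)
      have h1 : pc (fun a b => decide (a ≠ b)) (U ++ [X]) =
          pc (fun a b => decide (a ≠ b)) U + 1 := by
        rw [hUc, pc_concat]; simp [huX]
      cases V with
      | nil =>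
        have hih := G' hinj N U (by omega) (hg.sublist hsubU) hUne
        simp only [List.append_nil] at hcard
        simp only [pc_single] at hpcO
        omega
      | cons v V' =>
        have hvX : v ≠ X := fun h => hXV (by simp [← h])
        have h2 : pc (fun a b => decide (a ≠ b)) (X :: v :: V') =
            1 + pc (fun a b => decide (a ≠ b)) (v :: V') := by
          rw [pc_cons₂]; simp [Ne.symm hvX]
        have h3 : pc (fun a b => decide (a ≠ b)) (U ++ v :: V') =
            pc (fun a b => decide (a ≠ b)) (U ++ [v]) +
            pc (fun a b => decide (a ≠ b)) (v :: V') := pc_split U v V'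
        have hUVne : U ++ v :: V' ≠ [] := by simp
        have hlUV : (U ++ v :: V').length ≤ N := by simp at hlenO ⊢; omega
        by_cases huv : u = v
        · -- u = v : recurse with H''
          have hq1 : pc (abb A B) (U ++ [X]) = pc (abb A B) U + (if abb A B u X then 1 else 0) := by
            rw [hUc, pc_concat]
          have hq2 : pc (abb A B) (X :: v :: V') =
              (if abb A B X v then 1 else 0) + pc (abb A B) (v :: V') := rfl
          by_cases habuX : abb A B u X = true
          · -- then also abb X v (= abb X u) is true, so pc abb O ≥ 2, contradiction
            have habXv : abb A B X v = true := by rw [← huv]; exact abb_symm habuX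
            rw [hq1, hq2, habuX, habXv] at hqcO
            simp at hqcO
            omega
          · have habuX' : abb A B u X = false := by
              cases h : abb A B u X; rfl; exact absurd h habuX
            have habXv : abb A B X v = false := by
              cases h : abb A B X v
              · rfl
              · exact absurd (by rw [huv]; exact abb_symm h) habuX
            have hq4 : pc (abb A B) (U ++ v :: V') =
                pc (abb A B) (U ++ [v]) + pc (abb A B) (v :: V') := pc_split U v V'
            have hq5 : pc (abb A B) (U ++ [v]) = pc (abb A B) U + (if abb A B u v then 1 else 0) := by
              rw [hUc, pc_concat]
            have habuv : abb A B u v = false := by rw [← huv]; exact abb_self hAB u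
            have hq6 : pc (abb A B) (U ++ v :: V') = 1 := by
              rw [hq4, hq5, habuv]
              rw [hq1, hq2, habuX', habXv] at hqcO
              simp at hqcO ⊢
              omega
            have hih := ih (U ++ v :: V') hlUV (hg.sublist hsubUV) hq6
            have h5 : pc (fun a b => decide (a ≠ b)) (U ++ [v]) =
                pc (fun a b => decide (a ≠ b)) U + (if (decide (u ≠ v) : Bool) then 1 else 0) := by
              rw [hUc, pc_concat]
            have h6 : (if (decide (u ≠ v) : Bool) then 1 else 0) = 0 := by simp [huv]
            omega
        · -- u ≠ v : one fewer cut in O', use G'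
          have h5 : pc (fun a b => decide (a ≠ b)) (U ++ [v]) =
              pc (fun a b => decide (a ≠ b)) U + 1 := by
            rw [hUc, pc_concat]; simp [huv]
          have hih := G' hinj N (U ++ v :: V') hlUV (hg.sublist hsubUV) hUVne
          omega
end Hard


section Bridge

lemma ivt_asc {f : ℕ → ℕ} (hlip : ∀ i, f i ≤ f (i + 1) + 1 ∧ f (i + 1) ≤ f i + 1)
    {a b c : ℕ} (hab : a ≤ b) (h1 : f a ≤ c) (h2 : c ≤ f b) :
    ∃ l, a ≤ l ∧ l ≤ b ∧ f l = c := by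
  classical
  set s : Finset ℕ := (Finset.range (b + 1)).filter (fun l => a ≤ l ∧ f l ≤ c) with hs
  have hane : a ∈ s := by simp [hs]; omega
  have hsne : s.Nonempty := ⟨a, hane⟩
  set l₀ := s.max' hsne with hl₀
  have hl₀mem : l₀ ∈ s := s.max'_mem hsne
  have hmax : ∀ x ∈ s, x ≤ l₀ := fun x hx => Finset.le_max' s x hx
  clear_value l₀
  simp only [hs, Finset.mem_filter, Finset.mem_range] at hl₀mem
  obtain ⟨hl₀b, hal₀, hfl₀⟩ := hl₀mem
  by_cases hl₀eq : l₀ = b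
  · subst hl₀eq; exact ⟨l₀, hal₀, le_refl _, by omega⟩
  · have hnext : l₀ + 1 ∉ s := by
      intro hmem
      have := hmax _ hmem
      omega
    have hfnext : ¬ (f (l₀ + 1) ≤ c) := by
      intro h
      exact hnext (by simp [hs]; omega)
    have hc1 := (hlip l₀).1
    have hc2 := (hlip l₀).2
    exact ⟨l₀, hal₀, by omega, by omega⟩

lemma ivt_desc {f : ℕ → ℕ} (hlip : ∀ i, f i ≤ f (i + 1) + 1 ∧ f (i + 1) ≤ f i + 1)
    {a b c : ℕ} (hab : a ≤ b) (h1 : c ≤ f a) (h2 : f b ≤ c) :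
    ∃ l, a ≤ l ∧ l ≤ b ∧ f l = c := by
  classical
  set s : Finset ℕ := (Finset.range (b + 1)).filter (fun l => a ≤ l ∧ c ≤ f l) with hs
  have hane : a ∈ s := by simp [hs]; omega
  have hsne : s.Nonempty := ⟨a, hane⟩
  set l₀ := s.max' hsne with hl₀
  have hl₀mem : l₀ ∈ s := s.max'_mem hsne
  have hmax : ∀ x ∈ s, x ≤ l₀ := fun x hx => Finset.le_max' s x hx
  clear_value l₀
  simp only [hs, Finset.mem_filter, Finset.mem_range] at hl₀mem
  obtain ⟨hl₀b, hal₀, hfl₀⟩ := hl₀mem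
  by_cases hl₀eq : l₀ = b
  · subst hl₀eq; exact ⟨l₀, hal₀, le_refl _, by omega⟩
  · have hnext : l₀ + 1 ∉ s := by
      intro hmem
      have := hmax _ hmem
      omega
    have hfnext : ¬ (c ≤ f (l₀ + 1)) := by
      intro h
      exact hnext (by simp [hs]; omega)
    have hc1 := (hlip l₀).1
    have hc2 := (hlip l₀).2
    exact ⟨l₀, hal₀, by omega, by omega⟩

lemma count_pc (Pb : γ → γ → Bool) (f : ℕ → γ) :
    ∀ m, ((Finset.range m).filter (fun p => Pb (f p) (f (p + 1)) = true)).card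
      = pc Pb ((List.range (m + 1)).map f) := by
  intro m
  induction m with
  | zero => simp [pc, List.range_succ]
  | succ m ih =>
    have h2 : List.range (m + 1 + 1) = List.range (m + 1) ++ [m + 1] := by rw [List.range_succ]
    have h3 : List.range (m + 1) = List.range m ++ [m] := by rw [List.range_succ]
    rw [h3, List.map_append] at ih
    simp only [List.map_cons, List.map_nil] at ih
    rw [Finset.range_add_one, Finset.filter_insert, h2, h3, List.map_append, List.map_append]
    simp only [List.map_cons, List.map_nil]
    rw [pc_concat (List.range m |>.map f) (f m) (f (m + 1)), ← ih]
    by_cases hP : Pb (f m) (f (m + 1)) = true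
    · rw [if_pos hP, Finset.card_insert_of_notMem (by simp), if_pos hP]
    · rw [if_neg hP, if_neg hP]
      omega

end Bridge


section GrTransfer

lemma gr_of_greedy {k : ℕ} (owner : ℕ → Fin k) (ord : Fin k → Fin k)
    (hb : Function.Bijective ord)
    (hgr : ∀ (t : Fin k) (p q r : ℕ), p < r → r < q →
      owner p = ord t → owner q = ord t →
      owner r = ord t ∨ ∃ s : Fin k, s < t ∧ owner r = ord s) (m : ℕ) :
    Gr (fun g => ((Equiv.ofBijective ord hb).symm g : ℕ)) ((List.range m).map owner) := by
  intro a c hsub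
  obtain ⟨is, his, hpw⟩ := List.sublist_eq_map_getElem hsub
  have hlen : is.length = 3 := by
    have := congrArg List.length his
    simpa using this.symm
  obtain ⟨i1, i2, i3, rfl⟩ := List.length_eq_three.1 hlen
  simp only [List.map_cons, List.map_nil, List.cons.injEq, and_true] at his
  obtain ⟨ha1, hc2, ha3⟩ := his
  have hlt12 : i1 < i2 := by
    simp [List.pairwise_cons] at hpw
    exact hpw.1.1
  have hlt23 : i2 < i3 := by
    simp [List.pairwise_cons] at hpw
    exact hpw.2
  have hget : ∀ (i : Fin ((List.range m).map owner).length),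
      ((List.range m).map owner).get i = owner (i : ℕ) := by
    intro i
    simp
  rw [show ((List.range m).map owner)[i1] = owner (i1 : ℕ) from hget i1] at ha1
  rw [show ((List.range m).map owner)[i2] = owner (i2 : ℕ) from hget i2] at hc2
  rw [show ((List.range m).map owner)[i3] = owner (i3 : ℕ) from hget i3] at ha3
  have hordt : ord ((Equiv.ofBijective ord hb).symm a) = a :=
    (Equiv.ofBijective ord hb).apply_symm_apply a
  have h1 : owner (i1 : ℕ) = ord ((Equiv.ofBijective ord hb).symm a) := by rw [← ha1, hordt]
  have h3 : owner (i3 : ℕ) = ord ((Equiv.ofBijective ord hb).symm a) := by rw [← ha3, hordt]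
  rcases hgr ((Equiv.ofBijective ord hb).symm a) (i1 : ℕ) (i3 : ℕ) (i2 : ℕ)
    hlt12 hlt23 h1 h3 with h | ⟨s, hs, hos⟩
  · have hca : c = a := (hc2.trans h).trans hordt
    rw [hca]
  · have hcs : c = ord s := hc2.trans hos
    show ((Equiv.ofBijective ord hb).symm c : ℕ) ≤ ((Equiv.ofBijective ord hb).symm a : ℕ)
    have h4 : (Equiv.ofBijective ord hb).symm c = s := by
      rw [hcs]
      exact (Equiv.ofBijective ord hb).symm_apply_apply s
    rw [h4]
    exact Nat.le_of_lt hs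

end GrTransfer

end SwapAux

/-- After swapping two adjacent beads of different colors belonging to two
different agents in a greedily-obtained fair division with at most 2(k−1) cuts,
there is a fair division of the modified necklace with at most 2(k−1) cuts that
agrees with the original one on all beads not belonging to those two agents. -/
theorem swap_preserves_fair_division (m k : ℕ) (hk : 0 < k) (S : ℕ → Fin 2)
    (owner : ℕ → Fin k)
    (hdvd : ∀ i : Fin 2, k ∣ ((Finset.range m).filter (fun p => S p = i)).card)
    (hfair : ∀ (a : Fin k) (i : Fin 2),
      ((Finset.range m).filter (fun p => owner p = a ∧ S p = i)).card
        = ((Finset.range m).filter (fun p => S p = i)).card / k)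
    (hcuts : ((Finset.range (m - 1)).filter (fun p => owner p ≠ owner (p + 1))).card
        ≤ 2 * (k - 1))
    (hgreedy : GreedyStructure k owner)
    (j : ℕ) (hj : j + 1 < m) (hcol : S j ≠ S (j + 1))
    (hown : owner j ≠ owner (j + 1)) :
    ∃ owner' : ℕ → Fin k,
      (∀ (a : Fin k) (i : Fin 2),
        ((Finset.range m).filter (fun p => owner' p = a ∧
            (Function.update (Function.update S j (S (j + 1))) (j + 1) (S j)) p = i)).card
          = ((Finset.range m).filter (fun p => S p = i)).card / k) ∧
      ((Finset.range (m - 1)).filter (fun p => owner' p ≠ owner' (p + 1))).card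
        ≤ 2 * (k - 1) ∧
      ∀ p, owner p ≠ owner j → owner p ≠ owner (j + 1) → owner' p = owner p := by
  classical
  obtain ⟨ord, hbij, hgr⟩ := hgreedy
  set A := owner j with hA
  set B := owner (j + 1) with hB
  set S' := Function.update (Function.update S j (S (j + 1))) (j + 1) (S j) with hS'
  have hjne : j ≠ j + 1 := by omega
  have hSj : S' j = S (j + 1) := by
    rw [hS', Function.update_of_ne hjne, Function.update_self]
  have hSj1 : S' (j + 1) = S j := by rw [hS', Function.update_self]
  have hSother : ∀ p, p ≠ j → p ≠ j + 1 → S' p = S p := by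
    intro p h1 h2
    rw [hS', Function.update_of_ne h2, Function.update_of_ne h1]
  -- the pair region
  set LF := (Finset.range m).filter (fun p => owner p = A ∨ owner p = B) with hLF
  have hmemLF : ∀ p, p ∈ LF ↔ p < m ∧ (owner p = A ∨ owner p = B) := by
    intro p; simp [hLF]
  have hjLF : j ∈ LF := (hmemLF j).2 ⟨by omega, Or.inl rfl⟩
  have hj1LF : j + 1 ∈ LF := (hmemLF (j + 1)).2 ⟨hj, Or.inr rfl⟩
  -- color counts
  have hfin2 : ∀ x : Fin 2, x = 0 ∨ x = 1 := by decide
  have h01 : (0 : Fin 2) ≠ 1 := by decide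
  have hcardAgents : ∀ a : Fin k, ((Finset.range m).filter (fun p => owner p = a)).card
      = ((Finset.range m).filter (fun p => S p = 0)).card / k
        + ((Finset.range m).filter (fun p => S p = 1)).card / k := by
    intro a
    have hsplit : (Finset.range m).filter (fun p => owner p = a)
        = ((Finset.range m).filter (fun p => owner p = a ∧ S p = 0))
          ∪ ((Finset.range m).filter (fun p => owner p = a ∧ S p = 1)) := by
      ext p
      simp only [mem_filter, mem_union, mem_range]
      constructor
      · rintro ⟨h1, h2⟩
        rcases hfin2 (S p) with h | h
        · exact Or.inl ⟨h1, h2, h⟩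
        · exact Or.inr ⟨h1, h2, h⟩
      · rintro (⟨h1, h2, _⟩ | ⟨h1, h2, _⟩) <;> exact ⟨h1, h2⟩
    have hdisj : Disjoint ((Finset.range m).filter (fun p => owner p = a ∧ S p = 0))
        ((Finset.range m).filter (fun p => owner p = a ∧ S p = 1)) := by
      rw [Finset.disjoint_left]
      intro p hp1 hp2
      simp only [mem_filter] at hp1 hp2
      exact h01 (hp1.2.2 ▸ hp2.2.2 ▸ rfl)
    rw [hsplit, Finset.card_union_of_disjoint hdisj, hfair, hfair]
  set tA := ((Finset.range m).filter (fun p => S p = 0)).card / k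
    + ((Finset.range m).filter (fun p => S p = 1)).card / k with htA
  have hLFcard : LF.card = 2 * tA := by
    have hsplit : LF = ((Finset.range m).filter (fun p => owner p = A))
        ∪ ((Finset.range m).filter (fun p => owner p = B)) := by
      ext p
      simp only [hLF, mem_filter, mem_union, mem_range]
      tauto
    have hdisj : Disjoint ((Finset.range m).filter (fun p => owner p = A))
        ((Finset.range m).filter (fun p => owner p = B)) := by
      rw [Finset.disjoint_left]
      intro p hp1 hp2
      simp only [mem_filter] at hp1 hp2
      exact hown (hp1.2 ▸ hp2.2 ▸ rfl)
    rw [hsplit, Finset.card_union_of_disjoint hdisj, hcardAgents, hcardAgents]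
    omega
  set n := LF.card with hn
  have hnn : LF.card = n := rfl
  obtain ⟨e⟩ : Nonempty (Fin n ≃o {x // x ∈ LF}) := ⟨LF.orderIsoOfFin hnn⟩
  set q : ℕ → ℕ := fun i => if h : i < n then ((e ⟨i, h⟩ : ℕ)) else m + i with hq
  set idx : ℕ → ℕ := fun p => if hp : p ∈ LF then ((e.symm ⟨p, hp⟩ : Fin n) : ℕ) else 0
    with hidx
  have hqdef : ∀ i (h : i < n), q i = ((e ⟨i, h⟩ : {x // x ∈ LF}) : ℕ) := by
    intro i h
    simp only [hq]
    rw [dif_pos h]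
  have hidxdef : ∀ p (hp : p ∈ LF), idx p = ((e.symm ⟨p, hp⟩ : Fin n) : ℕ) := by
    intro p hp
    simp only [hidx]
    rw [dif_pos hp]
  have hq_mem : ∀ i, i < n → q i ∈ LF := by
    intro i hi
    rw [hqdef i hi]
    exact (e ⟨i, hi⟩).2
  have hq_lt : ∀ i i', i < i' → i' < n → q i < q i' := by
    intro i i' hii hi'
    have hi : i < n := lt_trans hii hi'
    rw [hqdef i hi, hqdef i' hi']
    have h1 : (⟨i, hi⟩ : Fin n) < ⟨i', hi'⟩ := by simpa using hii
    exact Subtype.coe_lt_coe.2 (e.lt_iff_lt.2 h1)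
  have hq_inj : ∀ i i', i < n → i' < n → q i = q i' → i = i' := by
    intro i i' hi hi' heq
    rcases lt_trichotomy i i' with h | h | h
    · exact absurd heq (ne_of_lt (hq_lt i i' h hi'))
    · exact h
    · exact absurd heq.symm (ne_of_lt (hq_lt i' i h hi))
  have hidx_lt : ∀ p, p ∈ LF → idx p < n := by
    intro p hp
    rw [hidxdef p hp]
    exact (e.symm ⟨p, hp⟩).2
  have hidx_q : ∀ p (hp : p ∈ LF), q (idx p) = p := by
    intro p hp
    have hlt : idx p < n := hidx_lt p hp
    rw [hqdef (idx p) hlt]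
    have h2 : (⟨idx p, hlt⟩ : Fin n) = e.symm ⟨p, hp⟩ := by
      apply Fin.ext
      simpa using hidxdef p hp
    rw [h2, OrderIso.apply_symm_apply]
  have hq_idx : ∀ i, i < n → idx (q i) = i := by
    intro i hi
    have hm0 := hq_mem i hi
    exact hq_inj _ _ (hidx_lt _ hm0) hi (hidx_q _ hm0)
  have himage : (Finset.range n).image q = LF := by
    apply Finset.eq_of_subset_of_card_le
    · intro p hp
      simp only [Finset.mem_image, Finset.mem_range] at hp
      obtain ⟨i, hi, rfl⟩ := hp
      exact hq_mem i hi
    · rw [Finset.card_image_of_injOn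
        (fun x hx y hy => hq_inj x y (by simpa using hx) (by simpa using hy))]
      simp [hnn]
  
  -- counting windows
  have hcount : ∀ (a b : ℕ), b ≤ n →
      (((Finset.Ico a b).image q).filter (fun p => S' p = 0)).card
        = ∑ i ∈ Finset.Ico a b, (if S' (q i) = 0 then 1 else 0) := by
    intro a b hb
    rw [Finset.filter_image]
    rw [Finset.card_image_of_injOn]
    · rw [Finset.card_filter]
    · intro x hx y hy hxy
      simp only [Finset.coe_filter, Set.mem_setOf_eq, Finset.mem_Ico] at hx hy
      exact hq_inj x y (by omega) (by omega) hxy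
  set g : ℕ → ℕ := fun l => ∑ i ∈ Finset.Ico l (l + tA), (if S' (q i) = 0 then 1 else 0)
    with hg
  have htA1 : 1 ≤ tA := by
    have : 0 < LF.card := Finset.card_pos.2 ⟨j, hjLF⟩
    omega
  have hlip : ∀ l, g l ≤ g (l + 1) + 1 ∧ g (l + 1) ≤ g l + 1 := by
    intro l
    have h1 : g l = (if S' (q l) = 0 then 1 else 0)
        + ∑ i ∈ Finset.Ico (l + 1) (l + tA), (if S' (q i) = 0 then 1 else 0) := by
      simp only [hg]
      exact Finset.sum_eq_sum_Ico_succ_bot (by omega) _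
    have h2 : g (l + 1) = (∑ i ∈ Finset.Ico (l + 1) (l + tA), (if S' (q i) = 0 then 1 else 0))
        + (if S' (q (l + tA)) = 0 then 1 else 0) := by
      simp only [hg]
      have h3 : l + 1 + tA = (l + tA) + 1 := by omega
      rw [h3]
      exact Finset.sum_Ico_succ_top (by omega) _
    by_cases c1 : S' (q l) = 0 <;> by_cases c2 : S' (q (l + tA)) = 0 <;>
      simp [c1, c2] at h1 h2 <;> omega
  -- total zero count over LF under S'
  have hswapLF : ∀ i : Fin 2, (LF.filter (fun p => S' p = i)).card
      = (LF.filter (fun p => S p = i)).card := by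
    intro i
    have hS'swap : ∀ p, S' p = S ((Equiv.swap j (j + 1)) p) := by
      intro p
      by_cases h1 : p = j
      · rw [h1, Equiv.swap_apply_left, hSj]
      · by_cases h2 : p = j + 1
        · rw [h2, Equiv.swap_apply_right, hSj1]
        · rw [Equiv.swap_apply_of_ne_of_ne h1 h2, hSother p h1 h2]
    have hswapmem : ∀ p, p ∈ LF → (Equiv.swap j (j + 1)) p ∈ LF := by
      intro p hp
      by_cases h1 : p = j
      · rw [h1, Equiv.swap_apply_left]; exact hj1LF
      · by_cases h2 : p = j + 1
        · rw [h2, Equiv.swap_apply_right]; exact hjLF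
        · rw [Equiv.swap_apply_of_ne_of_ne h1 h2]; exact hp
    apply Finset.card_bij' (fun p _ => (Equiv.swap j (j + 1)) p)
      (fun p _ => (Equiv.swap j (j + 1)) p)
    · intro p hp
      simp only [mem_filter] at hp ⊢
      exact ⟨hswapmem p hp.1, by rw [← hS'swap p]; exact hp.2⟩
    · intro p hp
      simp only [mem_filter] at hp ⊢
      constructor
      · by_cases h1 : p = j
        · rw [h1, Equiv.swap_apply_left]; exact hj1LF
        · by_cases h2 : p = j + 1
          · rw [h2, Equiv.swap_apply_right]; exact hjLF
          · rw [Equiv.swap_apply_of_ne_of_ne h1 h2]; exact hp.1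
      · rw [hS'swap ((Equiv.swap j (j+1)) p), Equiv.swap_apply_self]
        exact hp.2
    · intro p _; exact Equiv.swap_apply_self _ _ p
    · intro p _; exact Equiv.swap_apply_self _ _ p
  have hLFSi : ∀ i : Fin 2, (LF.filter (fun p => S p = i)).card
      = ((Finset.range m).filter (fun p => S p = i)).card / k
        + ((Finset.range m).filter (fun p => S p = i)).card / k := by
    intro i
    have hsplit : LF.filter (fun p => S p = i)
        = ((Finset.range m).filter (fun p => owner p = A ∧ S p = i))
          ∪ ((Finset.range m).filter (fun p => owner p = B ∧ S p = i)) := by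
      ext p
      simp only [hLF, mem_filter, mem_union, mem_range]
      tauto
    have hdisj : Disjoint ((Finset.range m).filter (fun p => owner p = A ∧ S p = i))
        ((Finset.range m).filter (fun p => owner p = B ∧ S p = i)) := by
      rw [Finset.disjoint_left]
      intro p hp1 hp2
      simp only [mem_filter] at hp1 hp2
      exact hown (hp1.2.1 ▸ hp2.2.1 ▸ rfl)
    rw [hsplit, Finset.card_union_of_disjoint hdisj, hfair, hfair]
  -- IVT setup
  have hgsum : g 0 + g tA = (LF.filter (fun p => S' p = 0)).card := by
    have h1 : g 0 + g tA = ∑ i ∈ Finset.Ico 0 (tA + tA), (if S' (q i) = 0 then 1 else 0) := by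
      simp only [hg]
      simp only [Nat.zero_add]
      exact Finset.sum_Ico_consecutive _ (by omega) (by omega)
    rw [h1]
    have h2 : Finset.Ico 0 (tA + tA) = Finset.Ico 0 n := by congr 1; omega
    rw [h2, ← hcount 0 n (le_refl n)]
    have h3 : Finset.Ico 0 n = Finset.range n := by rw [Finset.range_eq_Ico]
    rw [h3, himage]
  
  obtain ⟨l, hl0, hlta, hgl⟩ : ∃ l, 0 ≤ l ∧ l ≤ tA ∧
      g l = ((Finset.range m).filter (fun p => S p = 0)).card / k := by
    have hsum2 : g 0 + g tA = ((Finset.range m).filter (fun p => S p = 0)).card / k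
        + ((Finset.range m).filter (fun p => S p = 0)).card / k := by
      rw [hgsum, hswapLF 0, hLFSi 0]
    by_cases hcase : g 0 ≤ ((Finset.range m).filter (fun p => S p = 0)).card / k
    · exact SwapAux.ivt_asc hlip (by omega) hcase (by omega)
    · exact SwapAux.ivt_desc hlip (by omega) (by omega) (by omega)
  have hltA_n : l + tA ≤ n := by omega
  set W := (Finset.Ico l (l + tA)).image q with hW
  have hWsub : W ⊆ LF := by
    intro p hp
    simp only [hW, Finset.mem_image, Finset.mem_Ico] at hp
    obtain ⟨i, hi, rfl⟩ := hp
    exact hq_mem i (by omega)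
  have hWmem_iff : ∀ p, p ∈ LF → (p ∈ W ↔ l ≤ idx p ∧ idx p < l + tA) := by
    intro p hp
    constructor
    · intro hpW
      simp only [hW, Finset.mem_image, Finset.mem_Ico] at hpW
      obtain ⟨i, hi, rfl⟩ := hpW
      rw [hq_idx i (by omega)]
      exact hi
    · intro hi
      simp only [hW, Finset.mem_image, Finset.mem_Ico]
      exact ⟨idx p, hi, hidx_q p hp⟩
  have hWcard0 : (W.filter (fun p => S' p = 0)).card
      = ((Finset.range m).filter (fun p => S p = 0)).card / k := by
    rw [hW, hcount l (l + tA) hltA_n]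
    exact hgl
  have hWcard : W.card = tA := by
    rw [hW, Finset.card_image_of_injOn, Nat.card_Ico]
    · omega
    · intro x hx y hy hxy
      simp only [Finset.coe_Ico, Set.mem_Ico] at hx hy
      exact hq_inj x y (by omega) (by omega) hxy
  have hWpart : (W.filter (fun p => S' p = 0)).card + (W.filter (fun p => S' p = 1)).card
      = W.card := by
    have h1 := Finset.card_filter_add_card_filter_not
      (s := W) (p := fun p => S' p = 0)
    have h2 : W.filter (fun p => ¬ S' p = 0) = W.filter (fun p => S' p = 1) := by
      apply Finset.filter_congr
      intro p _
      rcases hfin2 (S' p) with h | h <;> simp [h] <;> intro hc <;> simp [hc] at h ⊢ <;> exact h01 h.symm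
    rw [h2] at h1
    exact h1
  set owner' : ℕ → Fin k := fun p => if p ∈ W then A else if p ∈ LF then B else owner p
    with howner'
  have howner'W : ∀ p, p ∈ W → owner' p = A := by
    intro p hp; simp only [howner', if_pos hp]
  have howner'B : ∀ p, p ∈ LF → p ∉ W → owner' p = B := by
    intro p hp hpn; simp only [howner', if_neg hpn, if_pos hp]
  have howner'o : ∀ p, p ∉ LF → owner' p = owner p := by
    intro p hp
    have hpn : p ∉ W := fun h => hp (hWsub h)
    simp only [howner', if_neg hpn, if_neg hp]
  refine ⟨owner', ?_, ?_, ?_⟩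
  · -- fairness
    intro a i
    by_cases haA : a = A
    · subst haA
      have hseteq : (Finset.range m).filter (fun p => owner' p = A ∧ S' p = i)
          = W.filter (fun p => S' p = i) := by
        ext p
        simp only [mem_filter, mem_range]
        constructor
        · rintro ⟨hpm, hpa, hpi⟩
          refine ⟨?_, hpi⟩
          by_contra hpW
          by_cases hpLF : p ∈ LF
          · rw [howner'B p hpLF hpW] at hpa
            exact hown hpa.symm
          · rw [howner'o p hpLF] at hpa
            exact hpLF ((hmemLF p).2 ⟨hpm, Or.inl hpa⟩)
        · rintro ⟨hpW, hpi⟩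
          exact ⟨((hmemLF p).1 (hWsub hpW)).1, howner'W p hpW, hpi⟩
      rw [hseteq]
      rcases hfin2 i with rfl | rfl
      · exact hWcard0
      · omega
    · by_cases haB : a = B
      · subst haB
        have hseteq : (Finset.range m).filter (fun p => owner' p = B ∧ S' p = i)
            = (LF.filter (fun p => S' p = i)) \ (W.filter (fun p => S' p = i)) := by
          ext p
          simp only [mem_filter, mem_range, Finset.mem_sdiff]
          constructor
          · rintro ⟨hpm, hpa, hpi⟩
            by_cases hpW : p ∈ W
            · rw [howner'W p hpW] at hpa
              exact absurd hpa hown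
            · by_cases hpLF : p ∈ LF
              · exact ⟨⟨hpLF, hpi⟩, fun hc => hpW hc.1⟩
              · rw [howner'o p hpLF] at hpa
                exact absurd ((hmemLF p).2 ⟨hpm, Or.inr hpa⟩) hpLF
          · rintro ⟨⟨hpLF, hpi⟩, hc⟩
            have hpW : p ∉ W := fun h => hc ⟨h, hpi⟩
            exact ⟨((hmemLF p).1 hpLF).1, howner'B p hpLF hpW, hpi⟩
        rw [hseteq, Finset.card_sdiff_of_subset (Finset.filter_subset_filter _ hWsub)]
        have hLFi := (hswapLF i).trans (hLFSi i)
        rcases hfin2 i with rfl | rfl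
        · omega
        · have hLF0 := (hswapLF 0).trans (hLFSi 0)
          have hLFpart : (LF.filter (fun p => S' p = 0)).card
              + (LF.filter (fun p => S' p = 1)).card = LF.card := by
            have h1 := Finset.card_filter_add_card_filter_not
              (s := LF) (p := fun p => S' p = 0)
            have h2 : LF.filter (fun p => ¬ S' p = 0) = LF.filter (fun p => S' p = 1) := by
              apply Finset.filter_congr
              intro p _
              rcases hfin2 (S' p) with h | h <;> simp [h] <;> intro hc <;> simp [hc] at h ⊢ <;> exact h01 h.symm
            rw [h2] at h1
            exact h1
          omega
      · have hseteq : (Finset.range m).filter (fun p => owner' p = a ∧ S' p = i)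
            = (Finset.range m).filter (fun p => owner p = a ∧ S p = i) := by
          apply Finset.filter_congr
          intro p hpm
          rw [Finset.mem_range] at hpm
          by_cases hpLF : p ∈ LF
          · constructor
            · rintro ⟨hpa, _⟩
              by_cases hpW : p ∈ W
              · rw [howner'W p hpW] at hpa; exact absurd hpa.symm haA
              · rw [howner'B p hpLF hpW] at hpa; exact absurd hpa.symm haB
            · rintro ⟨hpa, _⟩
              rcases ((hmemLF p).1 hpLF).2 with h | h
              · exact absurd (hpa.symm.trans h) haA
              · exact absurd (hpa.symm.trans h) haB
          · have h1 := howner'o p hpLF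
            have hpj : p ≠ j := fun h => hpLF (h ▸ hjLF)
            have hpj1 : p ≠ j + 1 := fun h => hpLF (h ▸ hj1LF)
            rw [h1, hSother p hpj hpj1]
        rw [hseteq]
        exact hfair a i
  · -- cuts
    have hk2 : 2 ≤ k := by
      have h : Nontrivial (Fin k) := ⟨⟨A, B, hown⟩⟩
      have h2 := Fintype.one_lt_card_iff_nontrivial.2 h
      rw [Fintype.card_fin] at h2
      omega
    have hsplit : ∀ f : ℕ → Fin k,
        ((Finset.range (m-1)).filter (fun p => f p ≠ f (p+1))).card
        = ((Finset.range (m-1)).filter (fun p => (f p ≠ f (p+1)) ∧ (p ∈ LF ∧ p+1 ∈ LF))).card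
        + ((Finset.range (m-1)).filter (fun p => (f p ≠ f (p+1)) ∧ ¬(p ∈ LF ∧ p+1 ∈ LF))).card := by
      intro f
      have h := Finset.card_filter_add_card_filter_not
        (s := (Finset.range (m-1)).filter (fun p => f p ≠ f (p+1)))
        (p := fun p => p ∈ LF ∧ p+1 ∈ LF)
      rw [Finset.filter_filter, Finset.filter_filter] at h
      exact h.symm
    have hextEq : (Finset.range (m-1)).filter
          (fun p => (owner' p ≠ owner' (p+1)) ∧ ¬(p ∈ LF ∧ p+1 ∈ LF))
        = (Finset.range (m-1)).filter
          (fun p => (owner p ≠ owner (p+1)) ∧ ¬(p ∈ LF ∧ p+1 ∈ LF)) := by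
      apply Finset.filter_congr
      intro p hp
      rw [Finset.mem_range] at hp
      have hpm : p + 1 < m := by omega
      by_cases h1 : p ∈ LF <;> by_cases h2 : p + 1 ∈ LF
      · simp [h1, h2]
      · have ho1' : owner' (p+1) = owner (p+1) := howner'o _ h2
        have hno : ¬(owner (p+1) = A ∨ owner (p+1) = B) :=
          fun hc => h2 ((hmemLF _).2 ⟨hpm, hc⟩)
        have hl : owner' p ≠ owner' (p+1) := by
          rw [ho1']
          by_cases hw : p ∈ W
          · rw [howner'W p hw]; exact fun hc => hno (Or.inl hc.symm)
          · rw [howner'B p h1 hw]; exact fun hc => hno (Or.inr hc.symm)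
        have hr : owner p ≠ owner (p+1) := by
          rcases ((hmemLF p).1 h1).2 with h | h <;> rw [h]
          · exact fun hc => hno (Or.inl hc.symm)
          · exact fun hc => hno (Or.inr hc.symm)
        simp [hl, hr, h2]
      · have ho1' : owner' p = owner p := howner'o _ h1
        have hno : ¬(owner p = A ∨ owner p = B) := by
          intro hc
          apply h1
          apply (hmemLF _).2
          exact ⟨by omega, hc⟩
        have hl : owner' p ≠ owner' (p+1) := by
          rw [ho1']
          by_cases hw : p + 1 ∈ W
          · rw [howner'W _ hw]; exact fun hc => hno (Or.inl hc)
          · rw [howner'B _ h2 hw]; exact fun hc => hno (Or.inr hc)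
        have hr : owner p ≠ owner (p+1) := by
          rcases ((hmemLF _).1 h2).2 with h | h <;> rw [h]
          · exact fun hc => hno (Or.inl hc)
          · exact fun hc => hno (Or.inr hc)
        simp [hl, hr, h1]
      · simp [howner'o p h1, howner'o (p+1) h2]
    have hconsec : ∀ p, p ∈ LF → p + 1 ∈ LF → idx (p+1) = idx p + 1 := by
      intro p hp hp1
      have hip : idx p < n := hidx_lt p hp
      have hip1 : idx (p+1) < n := hidx_lt _ hp1
      have hlt : idx p < idx (p+1) := by
        rcases lt_trichotomy (idx p) (idx (p+1)) with h | h | h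
        · exact h
        · exfalso
          have h2 : q (idx (p+1)) = q (idx p) := by rw [h]
          rw [hidx_q p hp, hidx_q _ hp1] at h2
          omega
        · exfalso
          have := hq_lt _ _ h hip
          rw [hidx_q p hp, hidx_q _ hp1] at this
          omega
      by_contra hne2
      have h3 : idx p + 1 < idx (p+1) := by omega
      have h4 := hq_lt (idx p) (idx p + 1) (by omega) (by omega : idx p + 1 < n)
      have h5 := hq_lt _ _ h3 hip1
      rw [hidx_q p hp] at h4
      rw [hidx_q _ hp1] at h5
      omega
    have hIntNew : ((Finset.range (m-1)).filter
        (fun p => (owner' p ≠ owner' (p+1)) ∧ (p ∈ LF ∧ p+1 ∈ LF))).card ≤ 2 := by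
      have hsub2 : ((Finset.range (m-1)).filter
          (fun p => (owner' p ≠ owner' (p+1)) ∧ (p ∈ LF ∧ p+1 ∈ LF)))
          ⊆ insert (q (l-1)) {q (l + tA - 1)} := by
        intro p hp
        simp only [Finset.mem_filter, Finset.mem_range] at hp
        obtain ⟨hpE, hcond, hpLF, hp1LF⟩ := hp
        have hidc := hconsec p hpLF hp1LF
        have hiff1 := hWmem_iff p hpLF
        have hiff2 := hWmem_iff _ hp1LF
        by_cases hw1 : p ∈ W <;> by_cases hw2 : p + 1 ∈ W
        · exfalso; apply hcond; rw [howner'W p hw1, howner'W _ hw2]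
        · have ha := hiff1.1 hw1
          have hb : ¬(l ≤ idx (p+1) ∧ idx (p+1) < l + tA) := fun hc => hw2 (hiff2.2 hc)
          have hpe : idx p = l + tA - 1 := by omega
          have hqp : q (l + tA - 1) = p := by rw [← hpe, hidx_q p hpLF]
          simp [hqp]
        · have hb := hiff2.1 hw2
          have ha : ¬(l ≤ idx p ∧ idx p < l + tA) := fun hc => hw1 (hiff1.2 hc)
          have hpe : idx p = l - 1 := by omega
          have hqp : q (l - 1) = p := by rw [← hpe, hidx_q p hpLF]
          simp [hqp]
        · exfalso; apply hcond; rw [howner'B p hpLF hw1, howner'B _ hp1LF hw2]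
      calc ((Finset.range (m-1)).filter
          (fun p => (owner' p ≠ owner' (p+1)) ∧ (p ∈ LF ∧ p+1 ∈ LF))).card
          ≤ (insert (q (l-1)) ({q (l + tA - 1)} : Finset ℕ)).card :=
            Finset.card_le_card hsub2
        _ ≤ 2 := by
            apply le_trans (Finset.card_insert_le _ _)
            simp
    have hIntOld1 : 1 ≤ ((Finset.range (m-1)).filter
        (fun p => (owner p ≠ owner (p+1)) ∧ (p ∈ LF ∧ p+1 ∈ LF))).card := by
      apply Finset.card_pos.2
      refine ⟨j, ?_⟩
      simp only [Finset.mem_filter, Finset.mem_range]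
      exact ⟨by omega, hown, hjLF, hj1LF⟩
    have hnew := hsplit owner'
    have hold := hsplit owner
    rw [hextEq] at hnew
    by_cases hIO : 2 ≤ ((Finset.range (m-1)).filter
        (fun p => (owner p ≠ owner (p+1)) ∧ (p ∈ LF ∧ p+1 ∈ LF))).card
    · omega
    · have hIO1 : ((Finset.range (m-1)).filter
          (fun p => (owner p ≠ owner (p+1)) ∧ (p ∈ LF ∧ p+1 ∈ LF))).card = 1 := by omega
      have hbr1 := SwapAux.count_pc (SwapAux.abb A B) owner (m-1)
      have hm1m : m - 1 + 1 = m := by omega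
      rw [hm1m] at hbr1
      have habEq : (Finset.range (m-1)).filter
            (fun p => SwapAux.abb A B (owner p) (owner (p+1)) = true)
          = (Finset.range (m-1)).filter
            (fun p => (owner p ≠ owner (p+1)) ∧ (p ∈ LF ∧ p+1 ∈ LF)) := by
        apply Finset.filter_congr
        intro p hp
        rw [Finset.mem_range] at hp
        have hpm : p < m := by omega
        have hp1m : p + 1 < m := by omega
        simp only [SwapAux.abb, decide_eq_true_eq]
        rw [hmemLF, hmemLF]
        constructor
        · rintro (⟨h1, h2⟩ | ⟨h1, h2⟩)
          · exact ⟨by rw [h1, h2]; exact hown, ⟨hpm, Or.inl h1⟩, ⟨hp1m, Or.inr h2⟩⟩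
          · exact ⟨by rw [h1, h2]; exact fun hc => hown hc.symm,
              ⟨hpm, Or.inr h1⟩, ⟨hp1m, Or.inl h2⟩⟩
        · rintro ⟨hne, ⟨_, hpo⟩, ⟨_, hp1o⟩⟩
          rcases hpo with h1 | h1 <;> rcases hp1o with h2 | h2
          · exact absurd (h1.trans h2.symm) hne
          · exact Or.inl ⟨h1, h2⟩
          · exact Or.inr ⟨h1, h2⟩
          · exact absurd (h1.trans h2.symm) hne
      have hbr2 := SwapAux.count_pc (fun a b => decide (a ≠ b)) owner (m-1)
      rw [hm1m] at hbr2
      have hneEq : (Finset.range (m-1)).filter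
            (fun p => (decide (owner p ≠ owner (p+1)) : Bool) = true)
          = (Finset.range (m-1)).filter (fun p => owner p ≠ owner (p+1)) := by
        apply Finset.filter_congr
        intro p _
        simp
      rw [hneEq] at hbr2
      have hrkinj : Function.Injective
          (fun g : Fin k => ((Equiv.ofBijective ord hbij).symm g : ℕ)) :=
        fun x y hxy => (Equiv.ofBijective ord hbij).symm.injective (Fin.val_injective hxy)
      have hGr := SwapAux.gr_of_greedy owner ord hbij hgr m
      have hab1 : SwapAux.pc (SwapAux.abb A B) ((List.range m).map owner) = 1 := by
        rw [← hbr1, habEq]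
        exact hIO1
      have hH := SwapAux.H'' hrkinj hown ((List.range m).map owner).length
        ((List.range m).map owner) (le_refl _) hGr hab1
      have hdk : ((List.range m).map owner).toFinset.card ≤ k := by
        calc ((List.range m).map owner).toFinset.card ≤ Fintype.card (Fin k) :=
              Finset.card_le_univ _
          _ = k := Fintype.card_fin k
      omega
  · -- agreement
    intro p hpA hpB
    have hpLF : p ∉ LF := by
      intro h
      rcases ((hmemLF p).1 h).2 with h' | h'
      · exact hpA h'
      · exact hpB h'
    exact howner'o p hpLF
end
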